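/- arXiv:2307.09429 — 3 statements merged into one kernel-verified Lean document; each statement's English description precedes it below -/
import Mathlib

section
/- Let C ⊂ ℝ^d be a convex body with interior lattice points of Λ only the origin (int C ∩ Λ = {0}), and let A ⊆ ∂C ∩ Λ be a set of boundary lattice points such that no two distinct points of A lie in a common face of C of dimension d−1 (facet). Then |A| ≤ 2^{k+1} − 2, where k is the dimension of the linear span of A. -/
open scoped Pointwise

noncomputable section

/-- Standard dot product on `Fin d → ℝ`. -/
def dot {d : ℕ} (x y : Fin d → ℝ) : ℝ := ∑ i, x i * y i

/-- A convex body: convex, compact, with nonempty interior. -/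
def IsConvexBody {d : ℕ} (C : Set (Fin d → ℝ)) : Prop :=
  Convex ℝ C ∧ IsCompact C ∧ (interior C).Nonempty

/-- A full-dimensional lattice: the integer span of a basis of `ℝ^d`. -/
def IsLattice {d : ℕ} (L : Set (Fin d → ℝ)) : Prop :=
  ∃ B : Module.Basis (Fin d) ℝ (Fin d → ℝ),
    L = Set.range (fun z : Fin d → ℤ => ∑ i, (z i : ℝ) • B i)

/-- The dual lattice: vectors pairing integrally with all lattice vectors. -/
def dualLattice {d : ℕ} (L : Set (Fin d → ℝ)) : Set (Fin d → ℝ) :=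
  {y | ∀ x ∈ L, ∃ n : ℤ, dot x y = (n : ℝ)}

/-- Width of `C` in direction `y`: `sup_{a,b ∈ C} y·(a-b)`. -/
def widthDir {d : ℕ} (C : Set (Fin d → ℝ)) (y : Fin d → ℝ) : ℝ :=
  sSup {r | ∃ a ∈ C, ∃ b ∈ C, r = dot y (a - b)}

/-- Lattice width of `C` with respect to a lattice `L`. -/
def latticeWidth {d : ℕ} (C L : Set (Fin d → ℝ)) : ℝ :=
  sInf {w | ∃ y ∈ dualLattice L, y ≠ 0 ∧ w = widthDir C y}

/-- A primitive lattice vector: a nonzero lattice vector such that no proper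
fraction of it is a lattice vector. -/
def IsPrimitiveVec {d : ℕ} (L : Set (Fin d → ℝ)) (v : Fin d → ℝ) : Prop :=
  v ∈ L ∧ v ≠ 0 ∧ ∀ t : ℝ, 0 < t → t < 1 → t • v ∉ L

/-- Lattice diameter of `C` w.r.t. `L`: the supremum of lattice lengths of
lattice segments contained in `C`, a segment of lattice length `t` being one of
the form `[a, a + t • v]` with `v` primitive in `L`. -/
def latticeDiam {d : ℕ} (C L : Set (Fin d → ℝ)) : ℝ :=
  sSup {t : ℝ | 0 ≤ t ∧ ∃ a v, IsPrimitiveVec L v ∧ segment ℝ a (a + t • v) ⊆ C}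

/-- The polar body `K* = {y : x·y ≤ 1 ∀ x ∈ K}`. -/
def polarBody {d : ℕ} (K : Set (Fin d → ℝ)) : Set (Fin d → ℝ) :=
  {y | ∀ x ∈ K, dot x y ≤ 1}

/-- First successive minimum of `K` w.r.t. the lattice `L`. -/
def lambda1 {d : ℕ} (K L : Set (Fin d → ℝ)) : ℝ :=
  sInf {r : ℝ | 0 ≤ r ∧ ∃ x ∈ L, x ≠ 0 ∧ x ∈ r • K}

/-- The difference body `C - C`. -/
def diffBody {d : ℕ} (C : Set (Fin d → ℝ)) : Set (Fin d → ℝ) := C - C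

/-- `C` is lattice reduced w.r.t. `L`: it is a convex body and no convex body
properly contained in it has the same lattice width. -/
def IsLatticeReduced {d : ℕ} (C L : Set (Fin d → ℝ)) : Prop :=
  IsConvexBody C ∧ ∀ C', IsConvexBody C' → C' ⊂ C → latticeWidth C' L ≠ latticeWidth C L

/-- `C` is lattice complete w.r.t. `L`: it is a convex body and no convex body
properly containing it has the same lattice diameter. -/
def IsLatticeComplete {d : ℕ} (C L : Set (Fin d → ℝ)) : Prop :=
  IsConvexBody C ∧ ∀ C', IsConvexBody C' → C ⊂ C' → latticeDiam C' L ≠ latticeDiam C L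

/-- A width direction of `C`: a nonzero dual lattice vector realizing the
lattice width. -/
def IsWidthDirection {d : ℕ} (C L : Set (Fin d → ℝ)) (y : Fin d → ℝ) : Prop :=
  y ∈ dualLattice L ∧ y ≠ 0 ∧ widthDir C y = latticeWidth C L

/-- A diameter direction of `C`: a primitive lattice vector parallel to a
lattice segment in `C` of maximal lattice length. -/
def IsDiameterDirection {d : ℕ} (C L : Set (Fin d → ℝ)) (v : Fin d → ℝ) : Prop :=
  IsPrimitiveVec L v ∧ ∃ a, segment ℝ a (a + latticeDiam C L • v) ⊆ C

/-- A diameter segment of `C`: a lattice segment contained in `C` whose lattice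
length equals the lattice diameter of `C`. -/
def IsDiameterSegment {d : ℕ} (C L : Set (Fin d → ℝ)) (a b : Fin d → ℝ) : Prop :=
  segment ℝ a b ⊆ C ∧ ∃ v, IsPrimitiveVec L v ∧ b = a + latticeDiam C L • v

/-- A polytope: the convex hull of finitely many points. -/
def IsPolytope {d : ℕ} (C : Set (Fin d → ℝ)) : Prop :=
  ∃ V : Finset (Fin d → ℝ), C = convexHull ℝ (V : Set (Fin d → ℝ))

/-- A facet of a `d`-dimensional body: a face (extreme subset) of dimension `d-1`. -/
def IsFacetOf {d : ℕ} (P F : Set (Fin d → ℝ)) : Prop :=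
  IsExtreme ℝ P F ∧ Module.finrank ℝ (vectorSpan ℝ F) + 1 = d

/-- The integer lattice `ℤ^d` inside `Fin d → ℝ`. -/
def intLattice (d : ℕ) : Set (Fin d → ℝ) := {x | ∀ i, ∃ n : ℤ, x i = (n : ℝ)}

section AuxCardBoundary

open Module

private lemma isExtreme_union' {d : ℕ} {C X Y : Set (Fin d → ℝ)} (hX : IsExtreme ℝ C X)
    (hY : IsExtreme ℝ C Y) : IsExtreme ℝ C (X ∪ Y) := by
  refine ⟨Set.union_subset hX.1 hY.1, ?_⟩
  intro x₁ h₁ x₂ h₂ x hx hseg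
  rcases hx with hx | hx
  · exact Or.inl (hX.2 h₁ h₂ hx hseg)
  · exact Or.inr (hY.2 h₁ h₂ hx hseg)

private lemma extreme_augment {d : ℕ} {C : Set (Fin d → ℝ)}
    (haff : affineSpan ℝ (Set.extremePoints ℝ C) = ⊤) :
    ∀ (n : ℕ) (X : Set (Fin d → ℝ)), IsExtreme ℝ C X → X.Nonempty →
      Module.finrank ℝ (vectorSpan ℝ X) + n + 1 = d →
      ∃ Y, IsExtreme ℝ C Y ∧ X ⊆ Y ∧ Module.finrank ℝ (vectorSpan ℝ Y) + 1 = d := by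
  intro n
  induction n with
  | zero => exact fun X hX _ h => ⟨X, hX, subset_rfl, by omega⟩
  | succ n ih =>
    intro X hX hXne hdim
    obtain ⟨x₀, hx₀⟩ := hXne
    have hlt : Module.finrank ℝ (vectorSpan ℝ X) < d := by omega
    have hex : ∃ e ∈ Set.extremePoints ℝ C, e ∉ affineSpan ℝ X := by
      by_contra h
      push_neg at h
      have htop : affineSpan ℝ X = ⊤ := by
        have h1 : affineSpan ℝ (Set.extremePoints ℝ C) ≤ affineSpan ℝ X :=
          affineSpan_le.mpr h
        exact top_unique (haff ▸ h1)
      have hvs : vectorSpan ℝ X = ⊤ := by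
        rw [← direction_affineSpan, htop, AffineSubspace.direction_top]
      rw [hvs] at hlt
      rw [finrank_top] at hlt
      simp [Module.finrank_fin_fun] at hlt
    obtain ⟨e, heE, heX⟩ := hex
    have hx₀' : x₀ ∈ affineSpan ℝ X := mem_affineSpan ℝ hx₀
    have hv0 : e - x₀ ∉ vectorSpan ℝ X := by
      intro hmem
      apply heX
      have := AffineSubspace.vadd_mem_of_mem_direction
        (by rwa [direction_affineSpan]) hx₀'
      simpa using this
    have hvne : e - x₀ ≠ 0 := fun h => hv0 (h ▸ (Submodule.zero_mem _))
    have hins : Module.finrank ℝ (vectorSpan ℝ (insert e X))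
        = Module.finrank ℝ (vectorSpan ℝ X) + 1 := by
      have h1 : vectorSpan ℝ (insert e X)
          = Submodule.span ℝ {e - x₀} ⊔ vectorSpan ℝ X := by
        rw [← direction_affineSpan, ← affineSpan_insert_affineSpan,
          AffineSubspace.direction_affineSpan_insert hx₀', direction_affineSpan]
        norm_num
      have hinf : (Submodule.span ℝ {e - x₀} ⊓ vectorSpan ℝ X)
          = (⊥ : Submodule ℝ (Fin d → ℝ)) := by
        refine le_antisymm ?_ bot_le
        rintro y ⟨hy1, hy2⟩
        obtain ⟨c, rfl⟩ := Submodule.mem_span_singleton.mp hy1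
        rcases eq_or_ne c 0 with rfl | hc
        · simp
        · exfalso
          apply hv0
          have : (c⁻¹ : ℝ) • (c • (e - x₀)) ∈ vectorSpan ℝ X :=
            Submodule.smul_mem _ _ hy2
          rwa [smul_smul, inv_mul_cancel₀ hc, one_smul] at this
      have := Submodule.finrank_sup_add_finrank_inf_eq
        (Submodule.span ℝ {e - x₀}) (vectorSpan ℝ X)
      rw [hinf, finrank_bot, finrank_span_singleton hvne] at this
      rw [h1]
      omega
    have hext' : IsExtreme ℝ C (insert e X) := by
      have := isExtreme_union' (isExtreme_singleton.mpr heE) hX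
      simpa using this
    obtain ⟨Y, hY, hsub, hrank⟩ := ih (insert e X) hext'
      ⟨x₀, Set.mem_insert_of_mem _ hx₀⟩ (by omega)
    exact ⟨Y, hY, (Set.subset_insert _ _).trans hsub, hrank⟩

private lemma exists_facet_containing {d : ℕ} {C : Set (Fin d → ℝ)}
    (hconv : Convex ℝ C) (hcomp : IsCompact C) (hne : (interior C).Nonempty)
    {a b mp : Fin d → ℝ} (ha : a ∈ C) (hb : b ∈ C)
    (hmp : mp = (1/2 : ℝ) • (a + b)) (hfr : mp ∉ interior C) :
    ∃ F, IsFacetOf C F ∧ a ∈ F ∧ b ∈ F := by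
  obtain ⟨f, hf⟩ := geometric_hahn_banach_open_point hconv.interior isOpen_interior hfr
  obtain ⟨y₀, hy₀⟩ := hne
  have hy0m : f y₀ < f mp := hf _ hy₀
  have hle : ∀ x ∈ C, f x ≤ f mp := by
    intro x hx
    by_contra hgt
    push_neg at hgt
    have hxy : 0 < f x - f y₀ := by linarith
    set t : ℝ := (f x - f mp) / (2 * (f x - f y₀)) with ht
    have ht0 : 0 < t := by
      apply div_pos (by linarith) (by linarith)
    have ht1 : t < 1 := by
      rw [ht, div_lt_one (by linarith)]
      linarith
    have hz : t • y₀ + (1 - t) • x ∈ interior C :=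
      hconv.openSegment_interior_self_subset_interior hy₀ hx
        ⟨t, 1 - t, ht0, by linarith, by ring, rfl⟩
    have hlt := hf _ hz
    have hfz : f (t • y₀ + (1 - t) • x) = t * f y₀ + (1 - t) * f x := by
      simp [map_add, map_smul, smul_eq_mul]
    rw [hfz] at hlt
    have htt : t * (f x - f y₀) = (f x - f mp) / 2 := by
      rw [ht]; field_simp
    nlinarith
  have hfm2 : f mp = (f a + f b) / 2 := by
    rw [hmp]
    simp only [map_smul, map_add, smul_eq_mul]
    ring
  have hfa : f a = f mp := by
    have h1 := hle a ha; have h2 := hle b hb; linarith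
  have hfb : f b = f mp := by
    have h1 := hle a ha; have h2 := hle b hb; linarith
  set F₀ : Set (Fin d → ℝ) := {x | x ∈ C ∧ f x = f mp} with hF₀
  have hext : IsExtreme ℝ C F₀ := by
    refine ⟨fun x hx => hx.1, ?_⟩
    rintro x₁ h₁ x₂ h₂ x ⟨hxC, hxf⟩ ⟨s, t, hs, htp, hst, rfl⟩
    have h1 : f x₁ ≤ f mp := hle _ h₁
    have h2 : f x₂ ≤ f mp := hle _ h₂
    have hco : s * f x₁ + t * f x₂ = f mp := by
      simpa [map_add, map_smul, smul_eq_mul] using hxf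
    have e1 : s * f x₁ ≤ s * f mp := mul_le_mul_of_nonneg_left h1 hs.le
    have e2 : t * f x₂ ≤ t * f mp := mul_le_mul_of_nonneg_left h2 htp.le
    have esum : s * f mp + t * f mp = f mp := by rw [← add_mul, hst, one_mul]
    have e3 : s * f x₁ = s * f mp := le_antisymm e1 (by linarith)
    have e4 : t * f x₂ = t * f mp := le_antisymm e2 (by linarith)
    exact ⟨h₁, mul_left_cancel₀ hs.ne' e3⟩
  have hmpC : mp ∈ C := by
    have := hconv ha hb (le_of_lt one_half_pos) (le_of_lt one_half_pos) (by norm_num)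
    rw [hmp, smul_add]
    convert this using 2
  have hmpF : mp ∈ F₀ := ⟨hmpC, rfl⟩
  have hd0 : 0 < d := by
    by_contra hd
    push_neg at hd
    interval_cases d
    have : mp = y₀ := Subsingleton.elim _ _
    rw [this] at hy0m
    exact lt_irrefl _ hy0m
  set φ : (Fin d → ℝ) →ₗ[ℝ] ℝ := (f : (Fin d → ℝ) →L[ℝ] ℝ).toLinearMap with hφ
  have hφv : ∀ x, φ x = f x := fun x => rfl
  have hrange : LinearMap.range φ = ⊤ := by
    rw [LinearMap.range_eq_top]
    intro r
    have hne0 : f (mp - y₀) ≠ 0 := by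
      rw [map_sub]; intro h; apply absurd hy0m; rw [sub_eq_zero] at h; linarith [h.symm]
    exact ⟨(r / f (mp - y₀)) • (mp - y₀), by
      rw [map_smul, smul_eq_mul, hφv, div_mul_cancel₀ _ hne0]⟩
  have hker : vectorSpan ℝ F₀ ≤ LinearMap.ker φ := by
    rw [vectorSpan_def]
    rw [Submodule.span_le]
    rintro v ⟨x, hx, y, hy, rfl⟩
    have : φ (x -ᵥ y) = 0 := by
      rw [vsub_eq_sub, map_sub, hφv, hφv, hx.2, hy.2, sub_self]
    exact this
  have hkerrank : Module.finrank ℝ (LinearMap.ker φ) + 1 = d := by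
    have h1 := LinearMap.finrank_range_add_finrank_ker φ
    rw [hrange, finrank_top] at h1
    rw [Module.finrank_fin_fun] at h1
    have h2 : Module.finrank ℝ ℝ = 1 := Module.finrank_self ℝ
    omega
  have hdim0 : Module.finrank ℝ (vectorSpan ℝ F₀) + 1 ≤ d := by
    have := Submodule.finrank_mono hker
    omega
  have haff : affineSpan ℝ (Set.extremePoints ℝ C) = ⊤ := by
    have hcl : closure (convexHull ℝ (Set.extremePoints ℝ C)) = C :=
      closure_convexHull_extremePoints hcomp hconv
    have h1 : C ⊆ (affineSpan ℝ (Set.extremePoints ℝ C) : Set (Fin d → ℝ)) := by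
      conv_lhs => rw [← hcl]
      exact closure_minimal (convexHull_subset_affineSpan _)
        (AffineSubspace.closed_of_finiteDimensional _)
    have h2 : affineSpan ℝ (interior C) = ⊤ :=
      isOpen_interior.affineSpan_eq_top ⟨y₀, hy₀⟩
    refine top_unique ?_
    rw [← h2]
    exact affineSpan_le.mpr fun x hx => h1 (interior_subset hx)
  obtain ⟨Y, hY, hsub, hrank⟩ := extreme_augment haff
    (d - 1 - Module.finrank ℝ (vectorSpan ℝ F₀)) F₀ hext ⟨mp, hmpF⟩ (by omega)
  exact ⟨Y, ⟨hY, hrank⟩, hsub ⟨ha, hfa⟩, hsub ⟨hb, hfb⟩⟩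

end AuxCardBoundary

set_option maxHeartbeats 2000000 in
set_option synthInstance.maxHeartbeats 200000 in
/-- if `C` is a convex body whose only interior lattice point is the
origin and `A` is a set of boundary lattice points, no two of which lie in a
common facet of `C`, then `|A| ≤ 2^(k+1) - 2` where `k = dim span A`. -/
theorem card_boundary_points_le {d : ℕ} (C L : Set (Fin d → ℝ))
    (hC : IsConvexBody C) (hL : IsLattice L)
    (hint : interior C ∩ L = {0})
    (A : Set (Fin d → ℝ)) (hA : A ⊆ frontier C ∩ L)
    (hsep : ∀ a ∈ A, ∀ b ∈ A, a ≠ b → ¬ ∃ F, IsFacetOf C F ∧ a ∈ F ∧ b ∈ F) :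
    A.Finite ∧ A.ncard ≤ 2 ^ (Module.finrank ℝ (Submodule.span ℝ A) + 1) - 2 := by
  classical
  obtain ⟨hconv, hcomp, hCne⟩ := hC
  obtain ⟨B, hB⟩ := hL
  have h0int : (0 : Fin d → ℝ) ∈ interior C := by
    have h0 : (0 : Fin d → ℝ) ∈ ({0} : Set (Fin d → ℝ)) := rfl
    rw [← hint] at h0
    exact h0.1
  have hCclosed : IsClosed C := hcomp.isClosed
  have hfrC : frontier C ⊆ C := hCclosed.frontier_subset
  have hAC : ∀ a ∈ A, a ∈ C := fun a ha => hfrC (hA ha).1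
  set Lsub : Submodule ℤ (Fin d → ℝ) := Submodule.span ℤ (Set.range B) with hLsub
  have hLset : L = (Lsub : Set (Fin d → ℝ)) := by
    rw [hB]
    ext x
    simp only [Set.mem_range, SetLike.mem_coe, hLsub]
    rw [Submodule.mem_span_range_iff_exists_fun]
    constructor
    · rintro ⟨z, rfl⟩
      exact ⟨z, by simp [Int.cast_smul_eq_zsmul]⟩
    · rintro ⟨c, rfl⟩
      exact ⟨c, by simp [Int.cast_smul_eq_zsmul]⟩
  set V : Submodule ℝ (Fin d → ℝ) := Submodule.span ℝ A with hV
  set Msub : Submodule ℤ (Fin d → ℝ) := Lsub ⊓ Submodule.restrictScalars ℤ V with hMsub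
  have hAM : ∀ a ∈ A, a ∈ Msub := by
    intro a ha
    refine Submodule.mem_inf.mpr ⟨?_, Submodule.subset_span ha⟩
    have := (hA ha).2
    rwa [hLset] at this
  haveI hdiscL : DiscreteTopology Lsub := by
    rw [hLsub]; infer_instance
  haveI hdiscM : DiscreteTopology Msub := by
    have hsub : (Msub : Set (Fin d → ℝ)) ⊆ (Lsub : Set (Fin d → ℝ)) := fun x hx =>
      (Submodule.mem_inf.mp hx).1
    exact DiscreteTopology.of_subset hdiscL hsub
  set V₀ : Submodule ℝ (Fin d → ℝ) := Submodule.span ℝ (Msub : Set (Fin d → ℝ)) with hV₀def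
  have hV₀ : V₀ = V := by
    refine le_antisymm ?_ ?_
    · rw [hV₀def, Submodule.span_le]
      intro x hx
      exact (Submodule.mem_inf.mp hx).2
    · rw [hV, Submodule.span_le]
      intro a ha
      exact Submodule.subset_span (hAM a ha)
  set L₀ : Submodule ℤ ↥V₀ := Msub.comap ((V₀.subtype).restrictScalars ℤ) with hL₀
  haveI hdisc0 : DiscreteTopology L₀ := by
    refine DiscreteTopology.preimage_of_continuous_injective (Msub : Set (Fin d → ℝ)) ?_
      (Submodule.injective_subtype _)
    exact LinearMap.continuous_of_finiteDimensional V₀.subtype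
  have h_img : V₀.subtype '' L₀ = Msub := by
    rw [← LinearMap.coe_restrictScalars ℤ V₀.subtype,
      ← Submodule.map_coe ((V₀.subtype).restrictScalars ℤ), Submodule.map_comap_eq_self]
    intro x hx
    exact LinearMap.mem_range.mpr ⟨⟨x, Submodule.subset_span hx⟩, rfl⟩
  haveI hzl : IsZLattice ℝ L₀ := ⟨by
    rw [← (Submodule.map_injective_of_injective (Submodule.injective_subtype _)).eq_iff,
      Submodule.map_span, Submodule.map_top, Submodule.range_subtype, h_img]⟩
  haveI : Module.Finite ℤ ↥L₀ := inferInstance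
  haveI : Module.Free ℤ ↥L₀ := inferInstance
  have hrank : Module.finrank ℤ ↥L₀ = Module.finrank ℝ ↥V₀ := ZLattice.rank ℝ L₀
  set k := Module.finrank ℝ ↥V with hk
  have hVV : Module.finrank ℝ ↥V₀ = k := by rw [hV₀]
  set ι := Module.Free.ChooseBasisIndex ℤ ↥L₀ with hι
  set c : Module.Basis ι ℤ ↥L₀ := Module.Free.chooseBasis ℤ ↥L₀ with hc
  have hcard : Fintype.card ι = k := by
    have h1 : Module.finrank ℤ ↥L₀ = Fintype.card ι :=
      Module.finrank_eq_card_chooseBasisIndex ℤ ↥L₀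
    rw [← h1, hrank, hVV]
  -- membership helpers
  have hmemV : ∀ a ∈ A, a ∈ V₀ := by
    intro a ha
    rw [hV₀]
    exact Submodule.subset_span ha
  have hmemL : ∀ a (ha : a ∈ A), (⟨a, hmemV a ha⟩ : ↥V₀) ∈ L₀ := by
    intro a ha
    exact Submodule.mem_comap.mpr (hAM a ha)
  set G : (Fin d → ℝ) → (ι → ZMod 2) := fun x =>
    if h : ∃ hv : x ∈ V₀, (⟨x, hv⟩ : ↥V₀) ∈ L₀ then
      fun i => (((c.repr ⟨⟨x, h.choose⟩, h.choose_spec⟩) i : ℤ) : ZMod 2)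
    else 0 with hG
  have hGspec : ∀ (x : Fin d → ℝ) (hv : x ∈ V₀) (hl : (⟨x, hv⟩ : ↥V₀) ∈ L₀),
      G x = fun i => (((c.repr ⟨⟨x, hv⟩, hl⟩) i : ℤ) : ZMod 2) := by
    intro x hv hl
    have h : ∃ hv : x ∈ V₀, (⟨x, hv⟩ : ↥V₀) ∈ L₀ := ⟨hv, hl⟩
    rw [hG]
    simp only [dif_pos h]
  -- halving lemma
  have half : ∀ p q : ↥L₀,
      (∀ i, ((c.repr p i : ℤ) : ZMod 2) = ((c.repr q i : ℤ) : ZMod 2)) →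
      ∃ w : ↥L₀, w + w = p - q := by
    intro p q h
    set n : ι →₀ ℤ := c.repr (p - q) with hn
    have hdvd : ∀ i, (2 : ℤ) ∣ n i := by
      intro i
      have hni : n i = c.repr p i - c.repr q i := by
        rw [hn, map_sub, Finsupp.sub_apply]
      have hz : ((n i : ℤ) : ZMod 2) = 0 := by
        rw [hni]
        push_cast
        rw [h i]
        ring
      have hdd := (ZMod.intCast_zmod_eq_zero_iff_dvd (n i) 2).mp hz
      exact_mod_cast hdd
    refine ⟨c.repr.symm (Finsupp.mapRange (· / 2) (by simp) n), ?_⟩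
    have h2 : Finsupp.mapRange (· / 2) (by simp : (0:ℤ)/2 = 0) n
        + Finsupp.mapRange (· / 2) (by simp : (0:ℤ)/2 = 0) n = n := by
      ext i
      simp only [Finsupp.add_apply, Finsupp.mapRange_apply]
      have := Int.mul_ediv_cancel' (hdvd i)
      omega
    rw [← map_add, h2, hn, LinearEquiv.symm_apply_apply]
  -- zero coset lemma
  have hGne : ∀ a ∈ A, G a ≠ 0 := by
    intro a ha h0
    obtain ⟨w, hw⟩ := half ⟨⟨a, hmemV a ha⟩, hmemL a ha⟩ 0 (by
      intro i
      have h1 := congrFun (hGspec a (hmemV a ha) (hmemL a ha)) i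
      rw [h0] at h1
      simp only [Pi.zero_apply] at h1
      rw [← h1, map_zero]
      simp)
    rw [sub_zero] at hw
    have hwE : ((w : ↥V₀) : Fin d → ℝ) + ((w : ↥V₀) : Fin d → ℝ) = a := by
      have := congrArg (fun z : ↥L₀ => ((z : ↥V₀) : Fin d → ℝ)) hw
      simpa using this
    set u := ((w : ↥V₀) : Fin d → ℝ) with hu
    have huhalf : u = (1/2 : ℝ) • a := by
      rw [← hwE]; rw [smul_add]
      ext j
      simp only [Pi.add_apply, Pi.smul_apply, smul_eq_mul]
      ring
    have huint : u ∈ interior C := by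
      apply hconv.openSegment_interior_self_subset_interior h0int (hAC a ha)
      refine ⟨1/2, 1/2, by norm_num, by norm_num, by norm_num, ?_⟩
      rw [smul_zero, zero_add, ← huhalf]
    have huL : u ∈ L := by
      rw [hLset]
      have : u ∈ Msub := Submodule.mem_comap.mp w.2
      exact (Submodule.mem_inf.mp this).1
    have : u ∈ interior C ∩ L := ⟨huint, huL⟩
    rw [hint] at this
    have ha0 : a = 0 := by
      rw [← hwE, this]
      simp
    have hafr := (hA ha).1
    rw [ha0] at hafr
    rw [hCclosed.frontier_eq] at hafr
    exact hafr.2 h0int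
  -- pair lemma
  have key : ∀ a ∈ A, ∀ b ∈ A, G a = G b → a = b ∨ a = -b := by
    intro a ha b hb hGab
    by_cases hab : a = b
    · exact Or.inl hab
    right
    obtain ⟨w, hw⟩ := half ⟨⟨a, hmemV a ha⟩, hmemL a ha⟩ ⟨⟨b, hmemV b hb⟩, hmemL b hb⟩ (by
      intro i
      have h1 := congrFun (hGspec a (hmemV a ha) (hmemL a ha)) i
      have h2 := congrFun (hGspec b (hmemV b hb) (hmemL b hb)) i
      rw [← h1, ← h2, hGab])
    have hwE : ((w : ↥V₀) : Fin d → ℝ) + ((w : ↥V₀) : Fin d → ℝ) = a - b := by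
      have := congrArg (fun z : ↥L₀ => ((z : ↥V₀) : Fin d → ℝ)) hw
      simpa using this
    set u := ((w : ↥V₀) : Fin d → ℝ) with hu
    set m : Fin d → ℝ := b + u with hm
    have hmhalf : m = (1/2 : ℝ) • (a + b) := by
      have : u + u = a - b := hwE
      ext j
      have hj := congrFun this j
      simp only [Pi.add_apply, Pi.sub_apply] at hj
      simp only [hm, Pi.add_apply, Pi.smul_apply, Pi.add_apply, smul_eq_mul]
      linarith
    have hmC : m ∈ C := by
      rw [hmhalf, smul_add]
      exact hconv (hAC a ha) (hAC b hb) (by norm_num) (by norm_num) (by norm_num)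
    have hmL : m ∈ L := by
      rw [hLset, hm]
      apply Lsub.add_mem
      · have := (hA hb).2
        rwa [hLset] at this
      · have : u ∈ Msub := Submodule.mem_comap.mp w.2
        exact (Submodule.mem_inf.mp this).1
    by_cases hmi : m ∈ interior C
    · have hm0 : m ∈ ({0} : Set (Fin d → ℝ)) := by
        rw [← hint]; exact ⟨hmi, hmL⟩
      have : (1/2 : ℝ) • (a + b) = 0 := by rw [← hmhalf]; exact hm0
      have hab0 : a + b = 0 := by
        have := congrArg (fun x => (2 : ℝ) • x) this
        simpa [smul_smul] using this
      exact eq_neg_of_add_eq_zero_left hab0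
    · exfalso
      obtain ⟨F, hF, haF, hbF⟩ := exists_facet_containing hconv hcomp hCne
        (hAC a ha) (hAC b hb) hmhalf hmi
      exact hsep a ha b hb hab ⟨F, hF, haF, hbF⟩
  -- finiteness
  have hAfin : A.Finite := by
    have hsub : A ⊆ ⋃ t : ι → ZMod 2, {x | x ∈ A ∧ G x = t} := fun x hx =>
      Set.mem_iUnion.mpr ⟨G x, hx, rfl⟩
    refine Set.Finite.subset (Set.finite_iUnion ?_) hsub
    intro t
    rcases Set.eq_empty_or_nonempty {x | x ∈ A ∧ G x = t} with he | ⟨x₀, hx₀⟩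
    · rw [he]; exact Set.finite_empty
    · refine Set.Finite.subset ((Set.finite_singleton (-x₀)).insert x₀) ?_
      rintro y ⟨hyA, hyG⟩
      rcases key y hyA x₀ hx₀.1 (hyG.trans hx₀.2.symm) with h | h
      · exact Set.mem_insert_iff.mpr (Or.inl h)
      · exact Set.mem_insert_iff.mpr (Or.inr (by simp [h]))
  refine ⟨hAfin, ?_⟩
  set S := hAfin.toFinset with hS
  have hmem : ∀ x, x ∈ S ↔ x ∈ A := fun x => hAfin.mem_toFinset
  have hcard2 : ∀ t ∈ S.image G, (S.filter fun x => G x = t).card ≤ 2 := by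
    intro t ht
    obtain ⟨x₀, hx₀S, hx₀G⟩ := Finset.mem_image.mp ht
    have hsubf : (S.filter fun x => G x = t) ⊆ {x₀, -x₀} := by
      intro y hy
      obtain ⟨hyS, hyG⟩ := Finset.mem_filter.mp hy
      rcases key y ((hmem y).mp hyS) x₀ ((hmem x₀).mp hx₀S)
        (by rw [hyG, hx₀G]) with h | h
      · simp [h]
      · simp [h]
    refine (Finset.card_le_card hsubf).trans ?_
    have h1 := Finset.card_insert_le x₀ ({-x₀} : Finset (Fin d → ℝ))
    simpa using h1
  have hbound := Finset.card_le_mul_card_image (f := G) S 2 hcard2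
  have himage : (S.image G).card ≤ 2 ^ k - 1 := by
    have hsub : S.image G ⊆ Finset.univ.erase 0 := by
      intro t ht
      obtain ⟨x, hxS, rfl⟩ := Finset.mem_image.mp ht
      exact Finset.mem_erase.mpr ⟨hGne x ((hmem x).mp hxS), Finset.mem_univ _⟩
    have h1 := Finset.card_le_card hsub
    have hcards : Fintype.card (ι → ZMod 2) = 2 ^ k := by
      rw [Fintype.card_fun, ZMod.card, hcard]
    have h2 := Finset.card_erase_of_mem (Finset.mem_univ (0 : ι → ZMod 2))
    rw [Finset.card_univ, hcards] at h2
    omega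
  have hAncard : A.ncard = S.card := by
    rw [hS]
    exact Set.ncard_eq_toFinset_card _ hAfin
  have hpow : 1 ≤ 2 ^ k := Nat.one_le_two_pow
  have h2 : 2 ^ (k + 1) = 2 * 2 ^ k := by rw [pow_succ]; ring
  omega
end
end

section
/- Let C ⊂ ℝ^d be an origin-symmetric convex body and Λ a full-dimensional lattice. Then C is lattice reduced with respect to Λ if and only if its polar body C* is lattice complete with respect to the dual lattice Λ*. Moreover, the width directions of C with respect to Λ coincide with the diameter directions of C* with respect to Λ*. -/
open scoped Pointwise

noncomputable section

namespace Aux11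

variable {d : ℕ}

lemma dot_comm (x y : Fin d → ℝ) : dot x y = dot y x := by
  unfold dot; exact Finset.sum_congr rfl fun i _ => mul_comm _ _

lemma dot_smul_left (t : ℝ) (x y : Fin d → ℝ) : dot (t • x) y = t * dot x y := by
  unfold dot; rw [Finset.mul_sum]
  exact Finset.sum_congr rfl fun i _ => by simp [mul_assoc]

lemma dot_smul_right (t : ℝ) (x y : Fin d → ℝ) : dot x (t • y) = t * dot x y := by
  rw [dot_comm, dot_smul_left, dot_comm]

lemma dot_neg_left (x y : Fin d → ℝ) : dot (-x) y = -dot x y := by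
  unfold dot; rw [← Finset.sum_neg_distrib]
  exact Finset.sum_congr rfl fun i _ => by simp

lemma dot_neg_right (x y : Fin d → ℝ) : dot x (-y) = -dot x y := by
  rw [dot_comm, dot_neg_left, dot_comm]

lemma dot_zero_left (y : Fin d → ℝ) : dot 0 y = 0 := by simp [dot]

lemma dot_zero_right (y : Fin d → ℝ) : dot y 0 = 0 := by simp [dot]

lemma dot_add_left (x x' y : Fin d → ℝ) : dot (x + x') y = dot x y + dot x' y := by
  unfold dot; rw [← Finset.sum_add_distrib]
  exact Finset.sum_congr rfl fun i _ => by simp [add_mul]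

lemma dot_sub_left (x x' y : Fin d → ℝ) : dot (x - x') y = dot x y - dot x' y := by
  rw [sub_eq_add_neg, dot_add_left, dot_neg_left, sub_eq_add_neg]

lemma dot_sub_right (x y y' : Fin d → ℝ) : dot x (y - y') = dot x y - dot x y' := by
  rw [dot_comm, dot_sub_left, dot_comm x y, dot_comm x y']

lemma dot_self_nonneg (y : Fin d → ℝ) : 0 ≤ dot y y :=
  Finset.sum_nonneg fun i _ => mul_self_nonneg _

lemma dot_self_pos {y : Fin d → ℝ} (hy : y ≠ 0) : 0 < dot y y := by
  rcases Function.ne_iff.1 hy with ⟨i, hi⟩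
  have h1 : (0:ℝ) < y i * y i := mul_self_pos.2 hi
  calc (0:ℝ) < y i * y i := h1
    _ ≤ ∑ j, y j * y j :=
      Finset.single_le_sum (f := fun j => y j * y j) (fun j _ => mul_self_nonneg _)
        (Finset.mem_univ i)

lemma continuous_dot_left (y : Fin d → ℝ) : Continuous fun x : Fin d → ℝ => dot y x := by
  unfold dot
  exact continuous_finset_sum _ fun i _ => (continuous_const.mul (continuous_apply i))

lemma abs_dot_le (x y : Fin d → ℝ) : |dot x y| ≤ (d : ℝ) * ‖x‖ * ‖y‖ := by
  unfold dot
  calc |∑ i, x i * y i| ≤ ∑ i, |x i * y i| := Finset.abs_sum_le_sum_abs _ _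
    _ ≤ ∑ _i : Fin d, ‖x‖ * ‖y‖ := by
        refine Finset.sum_le_sum fun i _ => ?_
        rw [abs_mul]
        exact mul_le_mul (norm_le_pi_norm x i) (norm_le_pi_norm y i) (abs_nonneg _)
          (norm_nonneg _)
    _ = (d : ℝ) * ‖x‖ * ‖y‖ := by simp [Finset.sum_const, mul_assoc]

lemma norm_sq_le_dot_self (y : Fin d → ℝ) : ‖y‖ ^ 2 ≤ dot y y := by
  have h : ‖y‖ ≤ Real.sqrt (dot y y) := by
    refine pi_norm_le_iff_of_nonneg (Real.sqrt_nonneg _) |>.2 fun i => ?_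
    have h1 : y i * y i ≤ dot y y :=
      Finset.single_le_sum (fun j _ => mul_self_nonneg (y j)) (Finset.mem_univ i)
    have : ‖y i‖ = Real.sqrt (y i * y i) := by
      rw [Real.sqrt_mul_self_eq_abs]; rfl
    rw [this]
    exact Real.sqrt_le_sqrt h1
  calc ‖y‖ ^ 2 ≤ Real.sqrt (dot y y) ^ 2 := by
        exact pow_le_pow_left₀ (norm_nonneg _) h 2
    _ = dot y y := Real.sq_sqrt (dot_self_nonneg y)

/-- The support-function value of `S` in direction `y`. -/
def supp (S : Set (Fin d → ℝ)) (y : Fin d → ℝ) : ℝ :=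
  sSup {r | ∃ x ∈ S, r = dot y x}

lemma supp_isGreatest {S : Set (Fin d → ℝ)} (hco : IsCompact S) (hne : S.Nonempty)
    (y : Fin d → ℝ) : IsGreatest {r | ∃ x ∈ S, r = dot y x} (supp S y) := by
  obtain ⟨x₀, hx₀, hmax⟩ := hco.exists_isMaxOn hne (continuous_dot_left y).continuousOn
  have hg : IsGreatest {r | ∃ x ∈ S, r = dot y x} (dot y x₀) :=
    ⟨⟨x₀, hx₀, rfl⟩, by rintro r ⟨x, hx, rfl⟩; exact hmax hx⟩
  rw [supp, hg.csSup_eq]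
  exact hg

lemma dot_le_supp {S : Set (Fin d → ℝ)} (hco : IsCompact S) (hne : S.Nonempty)
    {y x : Fin d → ℝ} (hx : x ∈ S) : dot y x ≤ supp S y :=
  (supp_isGreatest hco hne y).2 ⟨x, hx, rfl⟩

lemma supp_mem {S : Set (Fin d → ℝ)} (hco : IsCompact S) (hne : S.Nonempty)
    (y : Fin d → ℝ) : ∃ x ∈ S, supp S y = dot y x :=
  (supp_isGreatest hco hne y).1

lemma supp_le {S : Set (Fin d → ℝ)} (hco : IsCompact S) (hne : S.Nonempty)
    {y : Fin d → ℝ} {c : ℝ} (h : ∀ x ∈ S, dot y x ≤ c) : supp S y ≤ c := by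
  obtain ⟨x, hx, hs⟩ := supp_mem hco hne y
  rw [hs]; exact h x hx

lemma supp_smul {S : Set (Fin d → ℝ)} (hco : IsCompact S) (hne : S.Nonempty)
    {t : ℝ} (ht : 0 ≤ t) (y : Fin d → ℝ) : supp S (t • y) = t * supp S y := by
  obtain ⟨x₀, hx₀, hs⟩ := supp_mem hco hne y
  have : supp S (t • y) = dot (t • y) x₀ := by
    have hg : IsGreatest {r | ∃ x ∈ S, r = dot (t • y) x} (dot (t • y) x₀) := by
      refine ⟨⟨x₀, hx₀, rfl⟩, ?_⟩
      rintro r ⟨x, hx, rfl⟩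
      rw [dot_smul_left, dot_smul_left]
      exact mul_le_mul_of_nonneg_left (by
        have := dot_le_supp hco hne hx (y := y); rw [hs] at this; exact this) ht
    rw [supp, hg.csSup_eq]
  rw [this, dot_smul_left, hs]

lemma supp_mono {S T : Set (Fin d → ℝ)} (hcoS : IsCompact S) (hneS : S.Nonempty)
    (hcoT : IsCompact T) (hneT : T.Nonempty) (hST : S ⊆ T) (y : Fin d → ℝ) :
    supp S y ≤ supp T y := by
  obtain ⟨x, hx, hs⟩ := supp_mem hcoS hneS y
  rw [hs]; exact dot_le_supp hcoT hneT (hST hx)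

lemma supp_neg_of_symm {S : Set (Fin d → ℝ)} (hS : S = -S) (y : Fin d → ℝ) :
    supp S (-y) = supp S y := by
  unfold supp
  congr 1
  ext r
  constructor
  · rintro ⟨x, hx, rfl⟩
    refine ⟨-x, ?_, by rw [dot_neg_left, dot_neg_right]⟩
    rw [hS]; exact Set.neg_mem_neg.2 hx
  · rintro ⟨x, hx, rfl⟩
    refine ⟨-x, ?_, by rw [dot_neg_left, dot_neg_right, neg_neg]⟩
    rw [hS]; exact Set.neg_mem_neg.2 hx

lemma supp_nonneg {S : Set (Fin d → ℝ)} (hco : IsCompact S) (hne : S.Nonempty)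
    (h0 : (0:Fin d → ℝ) ∈ S) (y : Fin d → ℝ) : 0 ≤ supp S y := by
  have := dot_le_supp hco hne h0 (y := y)
  rwa [dot_zero_right] at this

lemma supp_ge_of_ball {S : Set (Fin d → ℝ)} (hco : IsCompact S) (hne : S.Nonempty)
    {ε : ℝ} (hε : 0 < ε) (hball : Metric.ball (0 : Fin d → ℝ) ε ⊆ S) (y : Fin d → ℝ) :
    ε / 2 * ‖y‖ ≤ supp S y := by
  rcases eq_or_ne y 0 with rfl | hy
  · simp [supp_nonneg hco hne (hball (by simp [hε]))]
  · have hny : 0 < ‖y‖ := norm_pos_iff.2 hy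
    set x := (ε / (2 * ‖y‖)) • y with hx
    have hxS : x ∈ S := by
      apply hball
      rw [Metric.mem_ball, dist_zero_right, hx, norm_smul]
      have h2 : ‖(ε / (2 * ‖y‖))‖ = ε / (2 * ‖y‖) := abs_of_pos (by positivity)
      rw [h2]
      rw [div_mul_eq_mul_div, mul_comm (2:ℝ) ‖y‖, ← div_div, mul_div_assoc,
        div_self (ne_of_gt hny)]
      linarith
    have hdx : dot y x = (ε / (2 * ‖y‖)) * dot y y := by rw [hx, dot_smul_right]
    have hle : ε / 2 * ‖y‖ ≤ dot y x := by
      rw [hdx]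
      have h1 : ‖y‖ ^ 2 ≤ dot y y := norm_sq_le_dot_self y
      have h2 : ε / 2 * ‖y‖ = ε / (2 * ‖y‖) * ‖y‖ ^ 2 := by
        field_simp
      rw [h2]
      have h3 : (0:ℝ) ≤ ε / (2 * ‖y‖) := by positivity
      exact mul_le_mul_of_nonneg_left h1 h3
    exact le_trans hle (dot_le_supp hco hne hxS)

end Aux11

namespace Aux11

lemma neg_set_smul (u : Set (Fin d → ℝ)) : -u = (-1 : ℝ) • u := by
  ext x; simp [Set.mem_smul_set, Set.mem_neg]

lemma interior_neg' (s : Set (Fin d → ℝ)) : interior (-s) = -interior s := by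
  rw [neg_set_smul, interior_smul₀ (by norm_num : (-1:ℝ) ≠ 0), ← neg_set_smul]

lemma zero_mem_interior_of_symm {C : Set (Fin d → ℝ)} (hconv : Convex ℝ C)
    (hsym : C = -C) (hne : (interior C).Nonempty) : (0 : Fin d → ℝ) ∈ interior C := by
  obtain ⟨x, hx⟩ := hne
  have hnx : -x ∈ interior C := by
    have h1 : x ∈ -interior C := by rw [← interior_neg', ← hsym]; exact hx
    exact Set.mem_neg.1 h1
  have hconvi : Convex ℝ (interior C) := hconv.interior
  have := hconvi hx hnx (by norm_num : (0:ℝ) ≤ 1/2) (by norm_num : (0:ℝ) ≤ 1/2)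
    (by norm_num)
  simpa using this

lemma exists_ball_subset {C : Set (Fin d → ℝ)} (h0 : (0 : Fin d → ℝ) ∈ interior C) :
    ∃ ε > 0, Metric.ball (0 : Fin d → ℝ) ε ⊆ C := by
  rcases Metric.isOpen_iff.1 isOpen_interior 0 h0 with ⟨ε, hε, hsub⟩
  exact ⟨ε, hε, hsub.trans interior_subset⟩

lemma polar_convex (S : Set (Fin d → ℝ)) : Convex ℝ (polarBody S) := by
  intro y₁ h₁ y₂ h₂ a b ha hb hab
  intro x hx
  have e : dot x (a • y₁ + b • y₂) = a * dot x y₁ + b * dot x y₂ := by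
    rw [dot_comm, dot_add_left, dot_smul_left, dot_smul_left, dot_comm y₁ x, dot_comm y₂ x]
  rw [e]
  calc a * dot x y₁ + b * dot x y₂ ≤ a * 1 + b * 1 := by
        gcongr
        · exact h₁ x hx
        · exact h₂ x hx
    _ = 1 := by rw [mul_one, mul_one, hab]

lemma polar_closed (S : Set (Fin d → ℝ)) : IsClosed (polarBody S) := by
  have : polarBody S = ⋂ x ∈ S, {y | dot x y ≤ 1} := by
    ext y; simp [polarBody, Set.mem_iInter]
  rw [this]
  exact isClosed_biInter fun x _ => isClosed_le (continuous_dot_left x) continuous_const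

lemma dot_single (i : Fin d) (c : ℝ) (y : Fin d → ℝ) :
    dot (Pi.single i c) y = c * y i := by
  unfold dot
  rw [Finset.sum_eq_single i]
  · simp
  · intro j _ hj; simp [Pi.single_eq_of_ne hj]
  · intro h; exact absurd (Finset.mem_univ i) h

lemma polar_subset_closedBall {S : Set (Fin d → ℝ)} {ε : ℝ} (hε : 0 < ε)
    (hball : Metric.ball (0 : Fin d → ℝ) ε ⊆ S) :
    polarBody S ⊆ Metric.closedBall (0 : Fin d → ℝ) (2 / ε) := by
  intro y hy
  rw [Metric.mem_closedBall, dist_zero_right]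
  refine pi_norm_le_iff_of_nonneg (by positivity) |>.2 fun i => ?_
  have key : ∀ c : ℝ, |c| < ε → c * y i ≤ 1 := fun c hc => by
    have hmem : Pi.single i c ∈ S := by
      apply hball
      rw [Metric.mem_ball, dist_zero_right]
      refine lt_of_le_of_lt (pi_norm_le_iff_of_nonneg (abs_nonneg c) |>.2 fun j => ?_) hc
      rcases eq_or_ne j i with rfl | hj
      · simp [Real.norm_eq_abs]
      · simp [Pi.single_eq_of_ne hj]
    have := hy _ hmem
    rwa [dot_single] at this
  have h1 : (ε/2) * y i ≤ 1 := key (ε/2) (by rw [abs_of_pos (by positivity)]; linarith)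
  have h2 : (-(ε/2)) * y i ≤ 1 := key (-(ε/2)) (by rw [abs_neg, abs_of_pos (by positivity)]; linarith)
  rw [Real.norm_eq_abs, abs_le]
  constructor
  · rw [neg_le, le_div_iff₀ hε]
    nlinarith [h2]
  · rw [le_div_iff₀ hε]
    nlinarith [h1]

lemma polar_compact {S : Set (Fin d → ℝ)} {ε : ℝ} (hε : 0 < ε)
    (hball : Metric.ball (0 : Fin d → ℝ) ε ⊆ S) : IsCompact (polarBody S) :=
  (isCompact_closedBall _ _).of_isClosed_subset (polar_closed S)
    (polar_subset_closedBall hε hball)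

lemma ball_subset_polar {S : Set (Fin d → ℝ)} {R : ℝ} (hR : 0 < R)
    (hS : S ⊆ Metric.closedBall (0 : Fin d → ℝ) R) :
    Metric.ball (0 : Fin d → ℝ) (1 / ((d + 1) * R)) ⊆ polarBody S := by
  intro u hu
  rw [Metric.mem_ball, dist_zero_right] at hu
  intro x hx
  have hxR : ‖x‖ ≤ R := by
    have := hS hx
    rwa [Metric.mem_closedBall, dist_zero_right] at this
  have h1 : dot x u ≤ |dot x u| := le_abs_self _
  have h2 : |dot x u| ≤ (d : ℝ) * ‖x‖ * ‖u‖ := abs_dot_le x u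
  have h3 : (d : ℝ) * ‖x‖ * ‖u‖ ≤ (d : ℝ) * R * ‖u‖ := by gcongr
  have h4 : (d : ℝ) * R * ‖u‖ ≤ (d : ℝ) * R * (1 / ((d + 1) * R)) := by
    have hd : (0:ℝ) ≤ (d:ℝ) * R := by positivity
    exact mul_le_mul_of_nonneg_left hu.le hd
  have h5 : (d : ℝ) * R * (1 / ((d + 1) * R)) ≤ 1 := by
    rw [mul_one_div, div_le_one (by positivity)]
    nlinarith [hR]
  linarith

lemma polar_zero_mem (S : Set (Fin d → ℝ)) : (0 : Fin d → ℝ) ∈ polarBody S :=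
  fun x _ => by rw [dot_zero_right]; norm_num

lemma polar_nonempty (S : Set (Fin d → ℝ)) : (polarBody S).Nonempty := ⟨0, polar_zero_mem S⟩

lemma polar_isConvexBody {S : Set (Fin d → ℝ)} (hco : IsCompact S) {ε : ℝ} (hε : 0 < ε)
    (hball : Metric.ball (0 : Fin d → ℝ) ε ⊆ S) : IsConvexBody (polarBody S) := by
  refine ⟨polar_convex S, polar_compact hε hball, ?_⟩
  obtain ⟨R, hR⟩ := hco.isBounded.subset_closedBall (0 : Fin d → ℝ)
  have hsub : S ⊆ Metric.closedBall (0 : Fin d → ℝ) (max R 1) :=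
    hR.trans (Metric.closedBall_subset_closedBall (le_max_left _ _))
  have hmax : (0:ℝ) < max R 1 := lt_of_lt_of_le one_pos (le_max_right _ _)
  have := ball_subset_polar hmax hsub
  exact ⟨0, interior_maximal this Metric.isOpen_ball (by
    simp only [Metric.mem_ball, dist_self]
    positivity)⟩

lemma polar_symm {S : Set (Fin d → ℝ)} (hsym : S = -S) : polarBody S = -polarBody S := by
  have key : ∀ y ∈ polarBody S, -y ∈ polarBody S := by
    intro y hy x hx
    have hnx : -x ∈ S := by rw [hsym]; exact Set.neg_mem_neg.2 hx
    have h := hy _ hnx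
    rw [dot_neg_left] at h
    rw [dot_neg_right]
    linarith
  ext y
  constructor
  · intro hy
    exact Set.mem_neg.2 (key y hy)
  · intro hy
    have h1 : -y ∈ polarBody S := Set.mem_neg.1 hy
    simpa using key _ h1

lemma polar_antitone {S T : Set (Fin d → ℝ)} (h : S ⊆ T) : polarBody T ⊆ polarBody S :=
  fun _ hy x hx => hy x (h hx)

/-- A continuous linear functional is given by `dot` with a fixed vector. -/
lemma clm_eq_dot (f : (Fin d → ℝ) →L[ℝ] ℝ) (x : Fin d → ℝ) :
    f x = dot x (fun i => f (Pi.single i 1)) := by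
  have hx : x = ∑ i, x i • (Pi.single i (1:ℝ) : Fin d → ℝ) := by
    conv_lhs => rw [pi_eq_sum_univ x]
    refine Finset.sum_congr rfl fun i _ => ?_
    congr 1
    ext j
    rcases eq_or_ne i j with rfl | hj
    · simp
    · simp [Pi.single_eq_of_ne (Ne.symm hj), if_neg hj]
  conv_lhs => rw [hx]
  rw [map_sum]
  unfold dot
  refine Finset.sum_congr rfl fun i _ => ?_
  rw [map_smul]
  simp [smul_eq_mul]

lemma exists_separating {S : Set (Fin d → ℝ)} (hconv : Convex ℝ S) (hcl : IsClosed S)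
    (h0 : (0 : Fin d → ℝ) ∈ S) {x : Fin d → ℝ} (hx : x ∉ S) :
    ∃ u ∈ polarBody S, 1 < dot x u := by
  obtain ⟨f, c, hfs, hfx⟩ := geometric_hahn_banach_closed_point hconv hcl hx
  have hc : 0 < c := by
    have h := hfs 0 h0
    rwa [map_zero] at h
  set u₀ : Fin d → ℝ := fun i => f (Pi.single i 1) with hu₀
  refine ⟨c⁻¹ • u₀, ?_, ?_⟩
  · intro s hs
    rw [dot_smul_right, ← clm_eq_dot]
    rw [inv_mul_le_iff₀ hc, mul_one]
    exact (hfs s hs).le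
  · rw [dot_smul_right, ← clm_eq_dot]
    rw [lt_inv_mul_iff₀ hc, mul_one]
    exact hfx

end Aux11

namespace Aux11

lemma bipolar {S : Set (Fin d → ℝ)} (hconv : Convex ℝ S) (hco : IsCompact S)
    (h0 : (0 : Fin d → ℝ) ∈ S) : polarBody (polarBody S) = S := by
  apply Set.Subset.antisymm
  · intro x hx
    by_contra hxS
    obtain ⟨u, hu, hdot⟩ := exists_separating hconv hco.isClosed h0 hxS
    have := hx u hu
    rw [dot_comm] at hdot
    linarith
  · intro x hx u hu
    have := hu x hx
    rwa [dot_comm]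

lemma subset_of_supp_le {S T : Set (Fin d → ℝ)} (hcoS : IsCompact S)
    (hconvT : Convex ℝ T) (hcoT : IsCompact T) (hneT : T.Nonempty)
    (h : ∀ y, supp S y ≤ supp T y) : S ⊆ T := by
  intro x hx
  by_contra hxT
  obtain ⟨f, c, hfs, hfx⟩ := geometric_hahn_banach_closed_point hconvT hcoT.isClosed hxT
  set u₀ : Fin d → ℝ := fun i => f (Pi.single i 1) with hu₀
  have h1 : supp T u₀ < c := by
    obtain ⟨z, hz, hez⟩ := supp_mem hcoT hneT u₀
    rw [hez, dot_comm, ← clm_eq_dot]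
    exact hfs z hz
  have h2 : c < supp S u₀ := by
    have he : f x = dot u₀ x := by rw [clm_eq_dot, dot_comm]
    exact lt_of_lt_of_le (he ▸ hfx) (dot_le_supp hcoS ⟨x, hx⟩ hx)
  have := h u₀
  linarith

lemma eq_of_supp_eq {S T : Set (Fin d → ℝ)} (hconvS : Convex ℝ S) (hcoS : IsCompact S)
    (hneS : S.Nonempty) (hconvT : Convex ℝ T) (hcoT : IsCompact T) (hneT : T.Nonempty)
    (h : ∀ y, supp S y = supp T y) : S = T :=
  Set.Subset.antisymm
    (subset_of_supp_le hcoS hconvT hcoT hneT fun y => (h y).le)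
    (subset_of_supp_le hcoT hconvS hcoS hneS fun y => (h y).ge)

end Aux11

namespace Aux11

lemma dot_add_right (x y y' : Fin d → ℝ) : dot x (y + y') = dot x y + dot x y' := by
  rw [dot_comm, dot_add_left, dot_comm y x, dot_comm y' x]

lemma dot_sum_left {ι : Type*} (s : Finset ι) (f : ι → (Fin d → ℝ)) (y : Fin d → ℝ) :
    dot (∑ i ∈ s, f i) y = ∑ i ∈ s, dot (f i) y := by
  classical
  induction s using Finset.induction_on with
  | empty => simp [dot_zero_left]
  | insert _ _ h ih => rw [Finset.sum_insert h, Finset.sum_insert h, dot_add_left, ih]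

lemma widthDir_eq {C : Set (Fin d → ℝ)} (hco : IsCompact C) (hne : C.Nonempty)
    (y : Fin d → ℝ) : widthDir C y = supp C y + supp C (-y) := by
  obtain ⟨a₀, ha₀, hsa⟩ := supp_mem hco hne y
  obtain ⟨b₀, hb₀, hsb⟩ := supp_mem hco hne (-y)
  have hg : IsGreatest {r | ∃ a ∈ C, ∃ b ∈ C, r = dot y (a - b)}
      (supp C y + supp C (-y)) := by
    constructor
    · refine ⟨a₀, ha₀, b₀, hb₀, ?_⟩
      rw [dot_sub_right, hsa, hsb, dot_neg_left, sub_eq_add_neg]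
    · rintro r ⟨a, ha, b, hb, rfl⟩
      have h1 : dot y a ≤ supp C y := dot_le_supp hco hne ha
      have h2 : dot (-y) b ≤ supp C (-y) := dot_le_supp hco hne hb
      rw [dot_neg_left] at h2
      rw [dot_sub_right]
      linarith
  rw [widthDir, hg.csSup_eq]

lemma widthDir_symm {C : Set (Fin d → ℝ)} (hco : IsCompact C) (hne : C.Nonempty)
    (hsym : C = -C) (y : Fin d → ℝ) : widthDir C y = 2 * supp C y := by
  rw [widthDir_eq hco hne, supp_neg_of_symm hsym]; ring

lemma widthDir_smul {C : Set (Fin d → ℝ)} (hco : IsCompact C) (hne : C.Nonempty)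
    {t : ℝ} (ht : 0 ≤ t) (y : Fin d → ℝ) : widthDir C (t • y) = t * widthDir C y := by
  rw [widthDir_eq hco hne, widthDir_eq hco hne, ← smul_neg, supp_smul hco hne ht,
    supp_smul hco hne ht]
  ring

lemma widthDir_nonneg {C : Set (Fin d → ℝ)} (hco : IsCompact C) (hne : C.Nonempty)
    (y : Fin d → ℝ) : 0 ≤ widthDir C y := by
  obtain ⟨x, hx⟩ := id hne
  rw [widthDir_eq hco hne]
  have h1 : dot y x ≤ supp C y := dot_le_supp hco hne hx
  have h2 : dot (-y) x ≤ supp C (-y) := dot_le_supp hco hne hx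
  rw [dot_neg_left] at h2
  linarith

lemma widthDir_mono {C' C : Set (Fin d → ℝ)} (hco' : IsCompact C') (hne' : C'.Nonempty)
    (hco : IsCompact C) (hsub : C' ⊆ C) (y : Fin d → ℝ) :
    widthDir C' y ≤ widthDir C y := by
  have hne : C.Nonempty := hne'.mono hsub
  rw [widthDir_eq hco' hne', widthDir_eq hco hne]
  have h1 := supp_mono hco' hne' hco hne hsub y
  have h2 := supp_mono hco' hne' hco hne hsub (-y)
  linarith

section Lattice

variable {B : Module.Basis (Fin d) ℝ (Fin d → ℝ)} {L : Set (Fin d → ℝ)}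
variable (hB : L = Set.range (fun z : Fin d → ℤ => ∑ i, (z i : ℝ) • B i))
include hB

lemma basis_mem_lattice (i : Fin d) : B i ∈ L := by
  rw [hB]
  refine ⟨Pi.single i 1, ?_⟩
  have hbeta : ∀ z : Fin d → ℤ,
      (fun z : Fin d → ℤ => ∑ j, (z j : ℝ) • B j) z = ∑ j, (z j : ℝ) • B j := fun _ => rfl
  rw [hbeta]
  rw [Finset.sum_eq_single i]
  · simp
  · intro j _ hj; simp [Pi.single_eq_of_ne hj]
  · intro h; exact absurd (Finset.mem_univ i) h

lemma mem_dual_iff (y : Fin d → ℝ) :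
    y ∈ dualLattice L ↔ ∀ i, ∃ n : ℤ, dot (B i) y = (n : ℝ) := by
  constructor
  · intro h i
    exact h (B i) (basis_mem_lattice hB i)
  · intro h x hx
    rw [hB] at hx
    obtain ⟨z, rfl⟩ := hx
    choose n hn using h
    refine ⟨∑ i, z i * n i, ?_⟩
    rw [dot_sum_left]
    push_cast
    refine Finset.sum_congr rfl fun i _ => ?_
    rw [dot_smul_left, hn i]

omit hB

lemma dual_sub {y y' : Fin d → ℝ} (hy : y ∈ dualLattice L) (hy' : y' ∈ dualLattice L) :
    y - y' ∈ dualLattice L := by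
  intro x hx
  obtain ⟨n, hn⟩ := hy x hx
  obtain ⟨n', hn'⟩ := hy' x hx
  exact ⟨n - n', by rw [dot_sub_right, hn, hn']; push_cast; ring⟩

include hB

lemma eq_zero_of_dot_basis_eq_zero {y : Fin d → ℝ} (h : ∀ i, dot (B i) y = 0) :
    y = 0 := by
  have hall : dot y y = 0 := by
    have hy : y = ∑ i, B.repr y i • B i := (B.sum_repr y).symm
    calc dot y y = dot (∑ i, B.repr y i • B i) y := by rw [← hy]
      _ = ∑ i, B.repr y i * dot (B i) y := by
          rw [dot_sum_left]
          exact Finset.sum_congr rfl fun i _ => dot_smul_left _ _ _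
      _ = 0 := by simp [h]
  by_contra hne
  exact absurd hall (ne_of_gt (dot_self_pos hne))

lemma dual_norm_lb (hd : 0 < d) :
    ∃ δ > 0, ∀ y ∈ dualLattice L, y ≠ 0 → δ ≤ ‖y‖ := by
  set Mb : ℝ := ∑ i, ‖B i‖ with hMb
  have hMbpos : 0 < Mb := by
    have i₀ : Fin d := ⟨0, hd⟩
    have h1 : ‖B i₀‖ ≤ Mb :=
      Finset.single_le_sum (f := fun i => ‖B i‖) (fun i _ => norm_nonneg _)
        (Finset.mem_univ i₀)
    have h2 : 0 < ‖B i₀‖ := norm_pos_iff.2 (B.ne_zero i₀)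
    linarith
  refine ⟨1 / ((d : ℝ) * Mb), by positivity, ?_⟩
  intro y hy hyne
  have hex : ∃ i, dot (B i) y ≠ 0 := by
    by_contra hno
    push_neg at hno
    exact hyne (eq_zero_of_dot_basis_eq_zero hB hno)
  obtain ⟨i, hi⟩ := hex
  obtain ⟨n, hn⟩ := (mem_dual_iff hB y).1 hy i
  have hnne : n ≠ 0 := by
    rintro rfl
    rw [hn] at hi
    exact hi (by norm_num)
  have h1 : (1:ℝ) ≤ |dot (B i) y| := by
    rw [hn, ← Int.cast_abs]
    exact_mod_cast Int.one_le_abs hnne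
  have h2 : |dot (B i) y| ≤ (d : ℝ) * ‖B i‖ * ‖y‖ := abs_dot_le _ _
  have h3 : (d : ℝ) * ‖B i‖ * ‖y‖ ≤ (d : ℝ) * Mb * ‖y‖ := by
    have : ‖B i‖ ≤ Mb :=
      Finset.single_le_sum (f := fun j => ‖B j‖) (fun j _ => norm_nonneg _)
        (Finset.mem_univ i)
    gcongr
  rw [div_le_iff₀ (by positivity)]
  nlinarith

lemma exists_dual_ne_zero (hd : 0 < d) : ∃ y ∈ dualLattice L, y ≠ 0 := by
  set φ : (Fin d → ℝ) →ₗ[ℝ] (Fin d → ℝ) :=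
    { toFun := fun y i => dot (B i) y
      map_add' := fun y y' => by ext i; exact dot_add_right _ _ _
      map_smul' := fun t y => by ext i; exact dot_smul_right _ _ _ } with hφ
  have hinj : Function.Injective φ := by
    rw [injective_iff_map_eq_zero]
    intro y hy
    exact eq_zero_of_dot_basis_eq_zero hB fun i => congrFun hy i
  have hsurj : Function.Surjective φ := LinearMap.injective_iff_surjective.1 hinj
  obtain ⟨y, hy⟩ := hsurj (fun _ => (1:ℝ))
  refine ⟨y, (mem_dual_iff hB y).2 fun i => ⟨1, by
    have := congrFun hy i
    simpa [hφ] using this⟩, ?_⟩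
  rintro rfl
  have := congrFun hy ⟨0, hd⟩
  simp [hφ, dot_zero_right] at this

lemma exists_primitive_smul (hd : 0 < d) {v : Fin d → ℝ}
    (hv : v ∈ dualLattice L) (hvne : v ≠ 0) :
    ∃ t₀ : ℝ, 0 < t₀ ∧ t₀ ≤ 1 ∧ IsPrimitiveVec (dualLattice L) (t₀ • v) := by
  obtain ⟨δ, hδ, hlb⟩ := dual_norm_lb hB hd
  have hnv : 0 < ‖v‖ := norm_pos_iff.2 hvne
  set c : ℝ := δ / ‖v‖ with hc
  have hcpos : 0 < c := by positivity
  set P : Set ℝ := {t | 0 < t ∧ t • v ∈ dualLattice L} with hP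
  have h1P : (1:ℝ) ∈ P := ⟨one_pos, by rwa [one_smul]⟩
  have hPlb : ∀ t ∈ P, c ≤ t := by
    rintro t ⟨ht, htv⟩
    have hne : t • v ≠ 0 := smul_ne_zero (ne_of_gt ht) hvne
    have := hlb _ htv hne
    rw [norm_smul, Real.norm_eq_abs, abs_of_pos ht] at this
    rw [hc, div_le_iff₀ hnv]
    exact this
  have hPne : P.Nonempty := ⟨1, h1P⟩
  have hPbdd : BddBelow P := ⟨c, hPlb⟩
  set t₀ : ℝ := sInf P with ht₀
  have ht₀c : c ≤ t₀ := le_csInf hPne hPlb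
  have ht₀pos : 0 < t₀ := lt_of_lt_of_le hcpos ht₀c
  obtain ⟨t, htP, htlt⟩ : ∃ t ∈ P, t < t₀ + c := by
    refine (csInf_lt_iff hPbdd hPne).1 ?_
    linarith
  have htmin : ∀ s ∈ P, t ≤ s := by
    intro s hs
    by_contra hlt
    push_neg at hlt
    have hts : t - s ∈ P := by
      refine ⟨by linarith [hs.1], ?_⟩
      rw [sub_smul]
      exact dual_sub htP.2 hs.2
    have h1 : c ≤ t - s := hPlb _ hts
    have h2 : t₀ ≤ s := csInf_le hPbdd hs
    linarith
  have hteq : t = t₀ := le_antisymm (le_csInf hPne htmin) (csInf_le hPbdd htP)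
  rw [hteq] at htP
  refine ⟨t₀, ht₀pos, ?_, htP.2, smul_ne_zero (ne_of_gt ht₀pos) hvne, ?_⟩
  · have := csInf_le hPbdd h1P
    rwa [← ht₀] at this
  · intro s hs0 hs1 hmem
    rw [smul_smul] at hmem
    have hsP : s * t₀ ∈ P := ⟨by positivity, hmem⟩
    have := csInf_le hPbdd hsP
    rw [← ht₀] at this
    nlinarith

end Lattice

end Aux11

namespace Aux11

lemma neg_mem_polar {S : Set (Fin d → ℝ)} (hsym : S = -S) {y : Fin d → ℝ}
    (hy : y ∈ polarBody S) : -y ∈ polarBody S := by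
  intro x hx
  have hnx : -x ∈ S := by rw [hsym]; exact Set.neg_mem_neg.2 hx
  have h := hy _ hnx
  rw [dot_neg_left] at h
  rw [dot_neg_right]
  linarith

/-- The minimal support value over nonzero dual lattice vectors. -/
def mval (S L : Set (Fin d → ℝ)) : ℝ :=
  sInf {r | ∃ y ∈ dualLattice L, y ≠ 0 ∧ r = supp S y}

section Formulas

variable {B : Module.Basis (Fin d) ℝ (Fin d → ℝ)} {L : Set (Fin d → ℝ)}
variable (hB : L = Set.range (fun z : Fin d → ℤ => ∑ i, (z i : ℝ) • B i)) (hd : 0 < d)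

lemma width_set_bddBelow {S : Set (Fin d → ℝ)} (hco : IsCompact S) (hne : S.Nonempty) :
    BddBelow {w | ∃ y ∈ dualLattice L, y ≠ 0 ∧ w = widthDir S y} := by
  refine ⟨0, ?_⟩
  rintro w ⟨y, _, _, rfl⟩
  exact widthDir_nonneg hco hne y

include hB hd

lemma mset_nonempty (S : Set (Fin d → ℝ)) :
    {r | ∃ y ∈ dualLattice L, y ≠ 0 ∧ r = supp S y}.Nonempty := by
  obtain ⟨y, hy, hyne⟩ := exists_dual_ne_zero hB hd
  exact ⟨supp S y, y, hy, hyne, rfl⟩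

lemma width_set_nonempty (S : Set (Fin d → ℝ)) :
    {w | ∃ y ∈ dualLattice L, y ≠ 0 ∧ w = widthDir S y}.Nonempty := by
  obtain ⟨y, hy, hyne⟩ := exists_dual_ne_zero hB hd
  exact ⟨widthDir S y, y, hy, hyne, rfl⟩

omit hB hd

lemma mset_bddBelow {S : Set (Fin d → ℝ)} (hco : IsCompact S) (hne : S.Nonempty)
    (h0 : (0 : Fin d → ℝ) ∈ S) :
    BddBelow {r | ∃ y ∈ dualLattice L, y ≠ 0 ∧ r = supp S y} := by
  refine ⟨0, ?_⟩
  rintro r ⟨y, _, _, rfl⟩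
  exact supp_nonneg hco hne h0 y

lemma mval_le {S : Set (Fin d → ℝ)} (hco : IsCompact S) (hne : S.Nonempty)
    (h0 : (0 : Fin d → ℝ) ∈ S) {y : Fin d → ℝ} (hy : y ∈ dualLattice L) (hyne : y ≠ 0) :
    mval S L ≤ supp S y :=
  csInf_le (mset_bddBelow hco hne h0) ⟨y, hy, hyne, rfl⟩

include hB hd

lemma mval_pos {S : Set (Fin d → ℝ)} (hco : IsCompact S) (hne : S.Nonempty)
    {ε : ℝ} (hε : 0 < ε) (hball : Metric.ball (0 : Fin d → ℝ) ε ⊆ S) :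
    0 < mval S L := by
  obtain ⟨δ, hδ, hlb⟩ := dual_norm_lb hB hd
  have key : ∀ r ∈ {r | ∃ y ∈ dualLattice L, y ≠ 0 ∧ r = supp S y}, ε / 2 * δ ≤ r := by
    rintro r ⟨y, hy, hyne, rfl⟩
    have h1 : ε / 2 * ‖y‖ ≤ supp S y := supp_ge_of_ball hco hne hε hball y
    have h2 : δ ≤ ‖y‖ := hlb y hy hyne
    nlinarith
  have : ε / 2 * δ ≤ mval S L := le_csInf (mset_nonempty hB hd S) key
  have hpos : (0:ℝ) < ε / 2 * δ := by positivity
  linarith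

lemma latticeWidth_eq_two_mval {S : Set (Fin d → ℝ)} (hco : IsCompact S)
    (hne : S.Nonempty) (hsym : S = -S) :
    latticeWidth S L = 2 * mval S L := by
  have hset : {w | ∃ y ∈ dualLattice L, y ≠ 0 ∧ w = widthDir S y}
      = (2:ℝ) • {r | ∃ y ∈ dualLattice L, y ≠ 0 ∧ r = supp S y} := by
    ext w
    constructor
    · rintro ⟨y, hy, hyne, rfl⟩
      refine ⟨supp S y, ⟨y, hy, hyne, rfl⟩, ?_⟩
      show (2:ℝ) • supp S y = widthDir S y
      rw [smul_eq_mul, ← widthDir_symm hco hne hsym]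
    · rintro ⟨r, ⟨y, hy, hyne, rfl⟩, rfl⟩
      refine ⟨y, hy, hyne, ?_⟩
      show (2:ℝ) • supp S y = widthDir S y
      rw [smul_eq_mul, ← widthDir_symm hco hne hsym]
  rw [latticeWidth, hset, Real.sInf_smul_of_nonneg (by norm_num : (0:ℝ) ≤ 2), smul_eq_mul,
    mval]

omit hB hd

lemma latticeWidth_mono' {C' C : Set (Fin d → ℝ)} (hco' : IsCompact C')
    (hne' : C'.Nonempty) (hco : IsCompact C) (hsub : C' ⊆ C)
    (hWC : {w | ∃ y ∈ dualLattice L, y ≠ 0 ∧ w = widthDir C y}.Nonempty) :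
    latticeWidth C' L ≤ latticeWidth C L := by
  refine le_csInf hWC ?_
  rintro w ⟨y, hy, hyne, rfl⟩
  calc latticeWidth C' L ≤ widthDir C' y :=
        csInf_le (width_set_bddBelow hco' hne') ⟨y, hy, hyne, rfl⟩
    _ ≤ widthDir C y := widthDir_mono hco' hne' hco hsub y

lemma segment_polar_iff {S : Set (Fin d → ℝ)} (hconv : Convex ℝ S) (hco : IsCompact S)
    (hne : S.Nonempty) (hsym : S = -S) (v : Fin d → ℝ) {t : ℝ} (ht : 0 ≤ t) :
    (∃ a, segment ℝ a (a + t • v) ⊆ polarBody S) ↔ t * supp S v ≤ 2 := by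
  constructor
  · rintro ⟨a, hseg⟩
    have ha : a ∈ polarBody S := hseg (left_mem_segment ℝ a _)
    have hb : a + t • v ∈ polarBody S := hseg (right_mem_segment ℝ a _)
    have hna : -a ∈ polarBody S := neg_mem_polar hsym ha
    have hmid : (1/2 : ℝ) • (a + t • v) + (1/2 : ℝ) • (-a) ∈ polarBody S :=
      polar_convex S hb hna (by norm_num) (by norm_num) (by norm_num)
    have heq : (1/2 : ℝ) • (a + t • v) + (1/2 : ℝ) • (-a) = (t/2) • v := by
      module
    rw [heq] at hmid
    rcases eq_or_lt_of_le ht with rfl | htpos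
    · have := supp_nonneg hco hne ?h0 v
      · nlinarith
      case h0 =>
        obtain ⟨x, hx⟩ := hne
        have : -x ∈ S := by rw [hsym]; exact Set.neg_mem_neg.2 hx
        have h2 := hconv hx this (by norm_num : (0:ℝ) ≤ 1/2) (by norm_num : (0:ℝ) ≤ 1/2)
          (by norm_num)
        simpa using h2
    · have hsupp : supp S v ≤ 2 / t := by
        refine supp_le hco hne fun x hx => ?_
        have h1 := hmid x hx
        rw [dot_smul_right] at h1
        rw [le_div_iff₀ htpos, dot_comm]
        nlinarith
      calc t * supp S v ≤ t * (2 / t) := by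
            exact mul_le_mul_of_nonneg_left hsupp ht
        _ = 2 := by field_simp
  · intro hts
    have h0S : (0 : Fin d → ℝ) ∈ S := by
      obtain ⟨x, hx⟩ := hne
      have hnx : -x ∈ S := by rw [hsym]; exact Set.neg_mem_neg.2 hx
      have h2 := hconv hx hnx (by norm_num : (0:ℝ) ≤ 1/2) (by norm_num : (0:ℝ) ≤ 1/2)
        (by norm_num)
      simpa using h2
    have hsnn : 0 ≤ supp S v := supp_nonneg hco hne h0S v
    have hmem₂ : (t/2) • v ∈ polarBody S := by
      intro x hx
      rw [dot_smul_right]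
      have h1 : dot x v ≤ supp S v := by rw [dot_comm]; exact dot_le_supp hco hne hx
      nlinarith
    have hmem₁ : -((t/2) • v) ∈ polarBody S := neg_mem_polar hsym hmem₂
    refine ⟨-((t/2) • v), ?_⟩
    have heq : -((t/2) • v) + t • v = (t/2) • v := by module
    rw [heq]
    exact (polar_convex S).segment_subset hmem₁ hmem₂

include hB hd

lemma latticeDiam_polar {S : Set (Fin d → ℝ)} (hconv : Convex ℝ S) (hco : IsCompact S)
    (hne : S.Nonempty) (hsym : S = -S) {ε : ℝ} (hε : 0 < ε)
    (hball : Metric.ball (0 : Fin d → ℝ) ε ⊆ S) :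
    latticeDiam (polarBody S) (dualLattice L) = 2 / mval S L := by
  set m := mval S L with hm
  have hmpos : 0 < m := mval_pos hB hd hco hne hε hball
  have h0S : (0 : Fin d → ℝ) ∈ S := hball (by simp [hε])
  set T := {t : ℝ | 0 ≤ t ∧ ∃ a v, IsPrimitiveVec (dualLattice L) v ∧
      segment ℝ a (a + t • v) ⊆ polarBody S} with hT
  have hTub : ∀ t ∈ T, t ≤ 2 / m := by
    rintro t ⟨ht0, a, v, hprim, hseg⟩
    have hsupp : m ≤ supp S v := mval_le hco hne h0S hprim.1 hprim.2.1
    have hts : t * supp S v ≤ 2 :=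
      (segment_polar_iff hconv hco hne hsym v ht0).1 ⟨a, hseg⟩
    rw [le_div_iff₀ hmpos]
    nlinarith
  have hTne : T.Nonempty := by
    obtain ⟨y, hy, hyne⟩ := exists_dual_ne_zero hB hd
    obtain ⟨t₀, _, _, hprim⟩ := exists_primitive_smul hB hd hy hyne
    refine ⟨0, le_refl 0, 0, t₀ • y, hprim, ?_⟩
    rw [zero_smul, add_zero]
    rw [segment_same]
    intro x hx
    rw [Set.mem_singleton_iff] at hx
    rw [hx]
    exact polar_zero_mem S
  have hTbdd : BddAbove T := ⟨2 / m, hTub⟩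
  refine le_antisymm (csSup_le hTne hTub) ?_
  refine le_of_forall_pos_le_add ?_
  intro γ hγ
  set η : ℝ := γ * m ^ 2 / 4 with hη
  have hηpos : 0 < η := by positivity
  obtain ⟨r, ⟨y, hy, hyne, rfl⟩, hrlt⟩ : ∃ r ∈ {r | ∃ y ∈ dualLattice L, y ≠ 0 ∧
      r = supp S y}, r < m + η := by
    refine (csInf_lt_iff (mset_bddBelow hco hne h0S) (mset_nonempty hB hd S)).1 ?_
    show mval S L < m + η
    rw [← hm]
    linarith
  obtain ⟨t₀, ht₀pos, ht₀le, hprim⟩ := exists_primitive_smul hB hd hy hyne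
  set v := t₀ • y with hv
  have hsv : supp S v ≤ supp S y := by
    rw [hv, supp_smul hco hne ht₀pos.le]
    have hnn : 0 ≤ supp S y := supp_nonneg hco hne h0S y
    nlinarith
  have hsvm : m ≤ supp S v := mval_le hco hne h0S hprim.1 hprim.2.1
  have hsvpos : 0 < supp S v := lt_of_lt_of_le hmpos hsvm
  set t : ℝ := 2 / supp S v with htdef
  have htpos : 0 < t := by positivity
  have htT : t ∈ T := by
    refine ⟨htpos.le, ?_⟩
    obtain ⟨a, hseg⟩ := (segment_polar_iff hconv hco hne hsym v htpos.le).2 (by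
      rw [htdef, div_mul_cancel₀]
      exact ne_of_gt hsvpos)
    exact ⟨a, v, hprim, hseg⟩
  have hle : t ≤ sSup T := le_csSup hTbdd htT
  have hkey : 2 / m - γ ≤ t := by
    have h1 : supp S v < m + η := lt_of_le_of_lt hsv hrlt
    have h2 : 2 / (m + η) ≤ t := by
      rw [htdef]
      apply div_le_div_of_nonneg_left (by norm_num) hsvpos h1.le
    have h3 : 2 / m - 2 / (m + η) ≤ γ := by
      rw [div_sub_div _ _ (ne_of_gt hmpos) (by positivity : m + η ≠ 0)]
      rw [div_le_iff₀ (by positivity)]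
      rw [hη]
      nlinarith
    linarith
  have hdiam : latticeDiam (polarBody S) (dualLattice L) = sSup T := rfl
  rw [hdiam]
  linarith

omit hB hd

lemma diam_bddAbove {K : Set (Fin d → ℝ)} {R δ : ℝ} (hR : 0 < R) (hδ : 0 < δ)
    (hK : K ⊆ Metric.closedBall (0 : Fin d → ℝ) R)
    (hlb : ∀ y ∈ dualLattice L, y ≠ 0 → δ ≤ ‖y‖) :
    BddAbove {t : ℝ | 0 ≤ t ∧ ∃ a v, IsPrimitiveVec (dualLattice L) v ∧
      segment ℝ a (a + t • v) ⊆ K} := by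
  refine ⟨2 * R / δ, ?_⟩
  rintro t ⟨ht0, a, v, hprim, hseg⟩
  have ha : a ∈ K := hseg (left_mem_segment ℝ a _)
  have hb : a + t • v ∈ K := hseg (right_mem_segment ℝ a _)
  have hna : ‖a‖ ≤ R := by
    have := hK ha; rwa [Metric.mem_closedBall, dist_zero_right] at this
  have hnb : ‖a + t • v‖ ≤ R := by
    have := hK hb; rwa [Metric.mem_closedBall, dist_zero_right] at this
  have htv : ‖t • v‖ ≤ 2 * R := by
    have : t • v = (a + t • v) - a := by abel
    rw [this]
    calc ‖(a + t • v) - a‖ ≤ ‖a + t • v‖ + ‖a‖ := norm_sub_le _ _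
      _ ≤ 2 * R := by linarith
  have hv : δ ≤ ‖v‖ := hlb v hprim.1 hprim.2.1
  have h1 : t * δ ≤ t * ‖v‖ := mul_le_mul_of_nonneg_left hv ht0
  have h2 : t * ‖v‖ ≤ 2 * R := by
    rw [norm_smul, Real.norm_eq_abs, abs_of_nonneg ht0] at htv
    exact htv
  rw [le_div_iff₀ hδ]
  nlinarith

end Formulas

end Aux11

namespace Aux11

lemma supp_halfDiff {C' : Set (Fin d → ℝ)} (hco : IsCompact C') (hne : C'.Nonempty)
    (hgood : ∀ x, x ∈ ({x | ∃ a ∈ C', ∃ b ∈ C', x = (2⁻¹:ℝ) • (a - b)} : Set (Fin d → ℝ))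
      ↔ ∃ a ∈ C', ∃ b ∈ C', x = (2⁻¹:ℝ) • (a - b))
    (y : Fin d → ℝ) :
    supp {x | ∃ a ∈ C', ∃ b ∈ C', x = (2⁻¹:ℝ) • (a - b)} y
      = 2⁻¹ * (supp C' y + supp C' (-y)) := by
  obtain ⟨a₀, ha₀, hsa⟩ := supp_mem hco hne y
  obtain ⟨b₀, hb₀, hsb⟩ := supp_mem hco hne (-y)
  have hg : IsGreatest {r | ∃ x ∈ ({x | ∃ a ∈ C', ∃ b ∈ C', x = (2⁻¹:ℝ) • (a - b)} :
      Set (Fin d → ℝ)), r = dot y x} (2⁻¹ * (supp C' y + supp C' (-y))) := by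
    constructor
    · refine ⟨(2⁻¹:ℝ) • (a₀ - b₀), ⟨a₀, ha₀, b₀, hb₀, rfl⟩, ?_⟩
      rw [dot_smul_right, dot_sub_right, hsa, hsb, dot_neg_left]
      ring
    · rintro r ⟨x, ⟨a, ha, b, hb, rfl⟩, rfl⟩
      rw [dot_smul_right, dot_sub_right]
      have h1 : dot y a ≤ supp C' y := dot_le_supp hco hne ha
      have h2 : dot (-y) b ≤ supp C' (-y) := dot_le_supp hco hne hb
      rw [dot_neg_left] at h2
      nlinarith
  rw [supp, hg.csSup_eq]

theorem main_result {d : ℕ} (C L : Set (Fin d → ℝ))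
    (hC : IsConvexBody C) (hsym : C = -C) (hL : IsLattice L) :
    (IsLatticeReduced C L ↔ IsLatticeComplete (polarBody C) (dualLattice L)) ∧
    (∀ y, IsWidthDirection C L y ↔
      IsDiameterDirection (polarBody C) (dualLattice L) y) := by
  rcases Nat.eq_zero_or_pos d with rfl | hd
  · -- degenerate case d = 0
    haveI : Subsingleton (Fin 0 → ℝ) := ⟨fun a b => funext fun i => i.elim0⟩
    obtain ⟨x₀, hx₀⟩ := hC.2.2
    have hx₀C : x₀ ∈ C := interior_subset hx₀
    have hCuniv : C = Set.univ :=
      Set.eq_univ_of_forall fun z => by rwa [Subsingleton.elim z x₀]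
    have hPuniv : polarBody C = Set.univ :=
      Set.eq_univ_of_forall fun z x hx => by
        have : dot x z = 0 := by simp [dot]
        rw [this]; norm_num
    constructor
    · constructor
      · intro _
        refine ⟨by rw [hPuniv, ← hCuniv]; exact hC, ?_⟩
        intro C' _ hss _
        exact hss.2 (by rw [hPuniv]; exact Set.subset_univ _)
      · intro _
        refine ⟨hC, ?_⟩
        intro C' hC' hss _
        obtain ⟨z, hz⟩ := hC'.2.2
        have hzC' : z ∈ C' := interior_subset hz
        have : C ⊆ C' := fun w _ => by rwa [Subsingleton.elim w z]
        exact hss.2 this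
    · intro y
      constructor
      · rintro ⟨_, hyne, _⟩
        exact absurd (Subsingleton.elim y 0) hyne
      · rintro ⟨⟨_, hyne, _⟩, _⟩
        exact absurd (Subsingleton.elim y 0) hyne
  · -- main case d > 0
    obtain ⟨B, hB⟩ := hL
    obtain ⟨hCconv, hCco, hCint⟩ := hC
    have hCne : C.Nonempty := hCint.mono interior_subset
    have h0int : (0 : Fin d → ℝ) ∈ interior C := zero_mem_interior_of_symm hCconv hsym hCint
    obtain ⟨ε, hε, hball⟩ := exists_ball_subset h0int
    have h0C : (0 : Fin d → ℝ) ∈ C := interior_subset h0int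
    obtain ⟨R₀, hR₀⟩ := hCco.isBounded.subset_closedBall (0 : Fin d → ℝ)
    set R : ℝ := max R₀ 1 with hRdef
    have hR : (0:ℝ) < R := lt_of_lt_of_le one_pos (le_max_right _ _)
    have hCR : C ⊆ Metric.closedBall (0 : Fin d → ℝ) R :=
      hR₀.trans (Metric.closedBall_subset_closedBall (le_max_left _ _))
    have hPbody : IsConvexBody (polarBody C) := polar_isConvexBody hCco hε hball
    have hbip : polarBody (polarBody C) = C := bipolar hCconv hCco h0C
    obtain ⟨δ, hδ, hlb⟩ := dual_norm_lb hB hd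
    set m : ℝ := mval C L with hm
    have hmpos : 0 < m := mval_pos hB hd hCco hCne hε hball
    have hwidthC : latticeWidth C L = 2 * m := latticeWidth_eq_two_mval hB hd hCco hCne hsym
    have hdiamC : latticeDiam (polarBody C) (dualLattice L) = 2 / m :=
      latticeDiam_polar hB hd hCconv hCco hCne hsym hε hball
    set r₀ : ℝ := 1 / (((d:ℝ) + 1) * R) with hr₀def
    have hr₀ : 0 < r₀ := by positivity
    have hballP : Metric.ball (0 : Fin d → ℝ) r₀ ⊆ polarBody C := ball_subset_polar hR hCR
    constructor
    · constructor
      · -- reduced → polar complete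
        intro hred
        refine ⟨hPbody, ?_⟩
        intro K hK hss heq
        obtain ⟨hKconv, hKco, hKint⟩ := hK
        have hsubPK : polarBody C ⊆ K := hss.1
        have hballK : Metric.ball (0 : Fin d → ℝ) r₀ ⊆ K := hballP.trans hsubPK
        have h0K : (0 : Fin d → ℝ) ∈ K := hballK (by simp [hr₀])
        have hK'body : IsConvexBody (polarBody K) := polar_isConvexBody hKco hr₀ hballK
        have hbipK : polarBody (polarBody K) = K := bipolar hKconv hKco h0K
        set K' := polarBody K with hK'def
        have hK'co : IsCompact K' := hK'body.2.1
        have hK'ne : K'.Nonempty := polar_nonempty K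
        have hK'subC : K' ⊆ C := by rw [← hbip]; exact polar_antitone hsubPK
        have hK'neC : K' ≠ C := by
          intro h
          have h2 : polarBody C = K := by rw [← h, hbipK]
          exact hss.ne h2
        have hK'ss : K' ⊂ C := ssubset_iff_subset_ne.2 ⟨hK'subC, hK'neC⟩
        have hwne : latticeWidth K' L ≠ latticeWidth C L := hred.2 K' hK'body hK'ss
        have hwle : latticeWidth K' L ≤ latticeWidth C L :=
          latticeWidth_mono' hK'co hK'ne hCco hK'subC (width_set_nonempty hB hd C)
        have hwlt : latticeWidth K' L < 2 * m := by
          rw [hwidthC] at hwle hwne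
          exact lt_of_le_of_ne hwle hwne
        obtain ⟨w, hwmem, hwlt2⟩ :=
          exists_lt_of_csInf_lt (width_set_nonempty hB hd K') hwlt
        obtain ⟨y, hyΛ, hyne, rfl⟩ := hwmem
        obtain ⟨t₀, ht₀pos, ht₀le, hprim⟩ := exists_primitive_smul hB hd hyΛ hyne
        set y₀ : Fin d → ℝ := t₀ • y with hy₀def
        have hy₀ne : y₀ ≠ 0 := hprim.2.1
        have hw0 : widthDir K' y₀ < 2 * m := by
          rw [hy₀def, widthDir_smul hK'co hK'ne ht₀pos.le]
          have hnn := widthDir_nonneg hK'co hK'ne y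
          nlinarith
        -- K' contains a small ball around 0
        obtain ⟨RK₀, hRK₀⟩ := hKco.isBounded.subset_closedBall (0 : Fin d → ℝ)
        set RK : ℝ := max RK₀ 1 with hRKdef
        have hRK : (0:ℝ) < RK := lt_of_lt_of_le one_pos (le_max_right _ _)
        have hKRK : K ⊆ Metric.closedBall (0 : Fin d → ℝ) RK :=
          hRK₀.trans (Metric.closedBall_subset_closedBall (le_max_left _ _))
        set r₁ : ℝ := 1 / (((d:ℝ) + 1) * RK) with hr₁def
        have hr₁ : 0 < r₁ := by positivity
        have hballK' : Metric.ball (0 : Fin d → ℝ) r₁ ⊆ K' := ball_subset_polar hRK hKRK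
        set g₁ : ℝ := supp K' y₀ with hg₁def
        set g₂ : ℝ := supp K' (-y₀) with hg₂def
        have hg₁pos : 0 < g₁ := by
          have h1 := supp_ge_of_ball hK'co hK'ne hr₁ hballK' y₀
          have h2 : 0 < ‖y₀‖ := norm_pos_iff.2 hy₀ne
          have : 0 < r₁ / 2 * ‖y₀‖ := by positivity
          linarith
        have hg₂pos : 0 < g₂ := by
          have h1 := supp_ge_of_ball hK'co hK'ne hr₁ hballK' (-y₀)
          have h2 : 0 < ‖(-y₀)‖ := by
            rw [norm_neg]; exact norm_pos_iff.2 hy₀ne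
          have : 0 < r₁ / 2 * ‖(-y₀)‖ := by positivity
          linarith
        have hgsum : g₁ + g₂ < 2 * m := by
          have := widthDir_eq hK'co hK'ne y₀
          rw [this] at hw0
          rw [hg₁def, hg₂def]
          exact hw0
        set x₁ : Fin d → ℝ := g₁⁻¹ • y₀ with hx₁def
        set x₂ : Fin d → ℝ := g₂⁻¹ • (-y₀) with hx₂def
        have hx₁K : x₁ ∈ K := by
          rw [← hbipK]
          intro s hs
          rw [hx₁def, dot_smul_right, dot_comm]
          have h1 : dot y₀ s ≤ g₁ := dot_le_supp hK'co hK'ne hs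
          calc g₁⁻¹ * dot y₀ s ≤ g₁⁻¹ * g₁ :=
                mul_le_mul_of_nonneg_left h1 (by positivity)
            _ = 1 := inv_mul_cancel₀ (ne_of_gt hg₁pos)
        have hx₂K : x₂ ∈ K := by
          rw [← hbipK]
          intro s hs
          rw [hx₂def, dot_smul_right, dot_comm]
          have h1 : dot (-y₀) s ≤ g₂ := dot_le_supp hK'co hK'ne hs
          calc g₂⁻¹ * dot (-y₀) s ≤ g₂⁻¹ * g₂ :=
                mul_le_mul_of_nonneg_left h1 (by positivity)
            _ = 1 := inv_mul_cancel₀ (ne_of_gt hg₂pos)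
        set t : ℝ := g₁⁻¹ + g₂⁻¹ with htdef
        have htpos : 0 < t := by positivity
        have heqx : x₂ + t • y₀ = x₁ := by
          rw [hx₁def, hx₂def, htdef]
          module
        have hseg : segment ℝ x₂ (x₂ + t • y₀) ⊆ K := by
          rw [heqx]
          exact hKconv.segment_subset hx₂K hx₁K
        have htmem : t ∈ {t : ℝ | 0 ≤ t ∧ ∃ a v, IsPrimitiveVec (dualLattice L) v ∧
            segment ℝ a (a + t • v) ⊆ K} := ⟨htpos.le, x₂, y₀, hprim, hseg⟩
        have hbdd := diam_bddAbove (L := L) hRK hδ hKRK hlb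
        have hle : t ≤ latticeDiam K (dualLattice L) := le_csSup hbdd htmem
        have hgt : 2 / m < t := by
          have h4 : 4 / (g₁ + g₂) ≤ g₁⁻¹ + g₂⁻¹ := by
            rw [inv_eq_one_div, inv_eq_one_div, div_add_div _ _ (ne_of_gt hg₁pos)
              (ne_of_gt hg₂pos), div_le_div_iff₀ (by positivity) (by positivity)]
            nlinarith [sq_nonneg (g₁ - g₂)]
          have h5 : 2 / m < 4 / (g₁ + g₂) := by
            rw [div_lt_div_iff₀ hmpos (by positivity)]
            nlinarith
          rw [htdef]
          linarith
        rw [heq, hdiamC] at hle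
        linarith
      · -- polar complete → reduced
        intro hcomp
        refine ⟨⟨hCconv, hCco, hCint⟩, ?_⟩
        intro C' hC' hss heqw
        obtain ⟨hC'conv, hC'co, hC'int⟩ := hC'
        have hC'ne : C'.Nonempty := hC'int.mono interior_subset
        set D : Set (Fin d → ℝ) := {x | ∃ a ∈ C', ∃ b ∈ C', x = (2⁻¹:ℝ) • (a - b)}
          with hDdef
        have hgood : ∀ x, x ∈ D ↔ ∃ a ∈ C', ∃ b ∈ C', x = (2⁻¹:ℝ) • (a - b) :=
          fun x => Iff.rfl
        have hDeq : D = (2⁻¹:ℝ) • (C' - C') := by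
          ext x
          simp only [hDdef, Set.mem_setOf_eq, Set.mem_smul_set, Set.mem_sub]
          constructor
          · rintro ⟨a, ha, b, hb, rfl⟩
            exact ⟨a - b, ⟨a, ha, b, hb, rfl⟩, rfl⟩
          · rintro ⟨z, ⟨a, ha, b, hb, rfl⟩, rfl⟩
            exact ⟨a, ha, b, hb, rfl⟩
        have hDconv : Convex ℝ D := by
          rw [hDeq]; exact (hC'conv.sub hC'conv).smul _
        have hDco : IsCompact D := by
          rw [hDeq, sub_eq_add_neg]; exact (hC'co.add hC'co.neg).smul _
        have hDsym : D = -D := by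
          ext x
          constructor
          · rintro ⟨a, ha, b, hb, rfl⟩
            refine Set.mem_neg.2 ⟨b, hb, a, ha, ?_⟩
            module
          · intro hx
            obtain ⟨a, ha, b, hb, hab⟩ := Set.mem_neg.1 hx
            refine ⟨b, hb, a, ha, ?_⟩
            have : x = -((2⁻¹:ℝ) • (a - b)) := by rw [← hab]; module
            rw [this]; module
        obtain ⟨c₀, hc₀⟩ := id hC'ne
        have h0D : (0 : Fin d → ℝ) ∈ D := ⟨c₀, hc₀, c₀, hc₀, by module⟩
        have hDne : D.Nonempty := ⟨0, h0D⟩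
        have hDsubC : D ⊆ C := by
          rintro x ⟨a, ha, b, hb, rfl⟩
          have haC : a ∈ C := hss.1 ha
          have hbC : -b ∈ C := by rw [hsym]; exact Set.neg_mem_neg.2 (hss.1 hb)
          have h2 := hCconv haC hbC (by norm_num : (0:ℝ) ≤ 1/2) (by norm_num : (0:ℝ) ≤ 1/2)
            (by norm_num)
          have he : (1/2:ℝ) • a + (1/2:ℝ) • (-b) = (2⁻¹:ℝ) • (a - b) := by module
          rwa [he] at h2
        have hDint : (interior D).Nonempty := by
          obtain ⟨x₀, hx₀⟩ := hC'int
          have h1 : interior C' + (-C') ⊆ interior (C' + (-C')) := subset_interior_add_left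
          have h2 : x₀ + (-c₀) ∈ interior (C' + (-C')) :=
            h1 ⟨x₀, hx₀, -c₀, Set.neg_mem_neg.2 hc₀, rfl⟩
          have h3 : interior D = (2⁻¹:ℝ) • interior (C' - C') := by
            rw [hDeq, interior_smul₀ (by norm_num : (2⁻¹:ℝ) ≠ 0)]
          rw [h3, sub_eq_add_neg]
          exact ⟨(2⁻¹:ℝ) • (x₀ + (-c₀)), Set.smul_mem_smul_set h2⟩
        have hsuppD : ∀ y, supp D y = 2⁻¹ * (supp C' y + supp C' (-y)) :=
          fun y => supp_halfDiff hC'co hC'ne hgood y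
        have hwD : ∀ y, widthDir D y = widthDir C' y := by
          intro y
          rw [widthDir_eq hDco hDne, widthDir_eq hC'co hC'ne, hsuppD, hsuppD, neg_neg]
          ring
        have hWDC' : latticeWidth D L = latticeWidth C' L := by
          unfold latticeWidth
          congr 1
          ext w
          constructor
          · rintro ⟨y, hy, hyne, rfl⟩; exact ⟨y, hy, hyne, hwD y⟩
          · rintro ⟨y, hy, hyne, rfl⟩; exact ⟨y, hy, hyne, (hwD y).symm⟩
        have hDneC : D ≠ C := by
          intro hDC
          have hsupple : ∀ y, supp C' y ≤ supp C y :=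
            fun y => supp_mono hC'co hC'ne hCco hCne hss.1 y
          have hsuppeq : ∀ y, supp C' y = supp C y := by
            intro y
            have h1 : supp D y = supp C y := by rw [hDC]
            have h2 := hsuppD y
            have h3 := hsupple y
            have h4 := hsupple (-y)
            have h5 : supp C (-y) = supp C y := supp_neg_of_symm hsym y
            linarith
          have : C' = C := eq_of_supp_eq hC'conv hC'co hC'ne hCconv hCco hCne hsuppeq
          exact hss.ne this
        have h0Dint : (0 : Fin d → ℝ) ∈ interior D :=
          zero_mem_interior_of_symm hDconv hDsym hDint
        obtain ⟨εD, hεD, hballD⟩ := exists_ball_subset h0Dint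
        set K := polarBody D with hKdef
        have hKbody : IsConvexBody K := polar_isConvexBody hDco hεD hballD
        have hCsubK : polarBody C ⊆ K := polar_antitone hDsubC
        have hKne : polarBody C ≠ K := by
          intro h
          have hbD : polarBody (polarBody D) = D := bipolar hDconv hDco h0D
          have : C = D := by rw [← hbip, h, hbD]
          exact hDneC this.symm
        have hKss : polarBody C ⊂ K := ssubset_iff_subset_ne.2 ⟨hCsubK, hKne⟩
        have hdiamK : latticeDiam K (dualLattice L) = 2 / mval D L :=
          latticeDiam_polar hB hd hDconv hDco hDne hDsym hεD hballD
        have hmD : mval D L = m := by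
          have h1 : latticeWidth D L = 2 * mval D L :=
            latticeWidth_eq_two_mval hB hd hDco hDne hDsym
          have h2 : latticeWidth D L = 2 * m := by
            rw [hWDC', heqw, hwidthC]
          linarith
        have := hcomp.2 K hKbody hKss
        apply this
        rw [hdiamK, hmD, hdiamC]
    · -- width directions = diameter directions
      intro y
      constructor
      · rintro ⟨hyΛ, hyne, heq⟩
        have hsupp : supp C y = m := by
          rw [widthDir_symm hCco hCne hsym, hwidthC] at heq
          linarith
        have hprim : IsPrimitiveVec (dualLattice L) y := by
          refine ⟨hyΛ, hyne, ?_⟩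
          intro s hs0 hs1 hmem
          have hne2 : s • y ≠ 0 := smul_ne_zero (ne_of_gt hs0) hyne
          have h1 : m ≤ supp C (s • y) := mval_le hCco hCne h0C hmem hne2
          rw [supp_smul hCco hCne hs0.le, hsupp] at h1
          nlinarith
        refine ⟨hprim, ?_⟩
        rw [hdiamC]
        refine (segment_polar_iff hCconv hCco hCne hsym y (by positivity)).2 ?_
        rw [hsupp, div_mul_cancel₀]
        exact ne_of_gt hmpos
      · rintro ⟨⟨hyΛ, hyne, _⟩, a, hseg⟩
        rw [hdiamC] at hseg
        have h1 : (2 / m) * supp C y ≤ 2 :=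
          (segment_polar_iff hCconv hCco hCne hsym y (by positivity)).1 ⟨a, hseg⟩
        have h2 : m ≤ supp C y := mval_le hCco hCne h0C hyΛ hyne
        have h3 : supp C y ≤ m := by
          rw [div_mul_eq_mul_div, div_le_iff₀ hmpos] at h1
          linarith
        refine ⟨hyΛ, hyne, ?_⟩
        rw [widthDir_symm hCco hCne hsym, hwidthC]
        linarith

end Aux11

/-- an origin-symmetric convex body is lattice reduced w.r.t. `L`
iff its polar body is lattice complete w.r.t. the dual lattice; moreover its
width directions coincide with the diameter directions of the polar body. -/
theorem symmetric_reduced_iff_polar_complete {d : ℕ} (C L : Set (Fin d → ℝ))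
    (hC : IsConvexBody C) (hsym : C = -C) (hL : IsLattice L) :
    (IsLatticeReduced C L ↔ IsLatticeComplete (polarBody C) (dualLattice L)) ∧
    (∀ y, IsWidthDirection C L y ↔
      IsDiameterDirection (polarBody C) (dualLattice L) y) := by
  exact Aux11.main_result C L hC hsym hL
end
end

section
/- The Voronoi cell V_Λ = {x ∈ ℝ^d : |x| ≤ |x−a| for all a ∈ Λ} of a full-dimensional lattice Λ ⊂ ℝ^d is lattice complete with respect to Λ, and its polar (V_Λ)* is lattice reduced with respect to the dual lattice Λ*. -/
open scoped Pointwise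

noncomputable section

/-- The Voronoi cell of a lattice: points at least as close to the origin as to
any lattice point (squared Euclidean distances expressed via the dot product). -/
def voronoiCell {d : ℕ} (L : Set (Fin d → ℝ)) : Set (Fin d → ℝ) :=
  {x | ∀ a ∈ L, dot x x ≤ dot (x - a) (x - a)}

section dotlemmas
variable {d : ℕ}

lemma dot_comm (x y : Fin d → ℝ) : dot x y = dot y x := by
  simp [dot, mul_comm]

lemma dot_nonneg (x : Fin d → ℝ) : 0 ≤ dot x x :=
  Finset.sum_nonneg fun i _ => mul_self_nonneg _

lemma dot_eq_inner (x y : Fin d → ℝ) :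
    dot x y = (inner ℝ ((EuclideanSpace.equiv (Fin d) ℝ).symm x) ((EuclideanSpace.equiv (Fin d) ℝ).symm y) : ℝ) := by
  simp [dot, PiLp.inner_apply, RCLike.inner_apply, mul_comm]

lemma dot_self_eq_zero {x : Fin d → ℝ} (h : dot x x = 0) : x = 0 := by
  rw [dot_eq_inner] at h
  have := inner_self_eq_zero (𝕜 := ℝ) (x := (EuclideanSpace.equiv (Fin d) ℝ).symm x) |>.mp h
  simpa using congrArg (EuclideanSpace.equiv (Fin d) ℝ) this

lemma dot_cs (x y : Fin d → ℝ) : dot x y * dot x y ≤ dot x x * dot y y := by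
  rw [dot_eq_inner, dot_eq_inner, dot_eq_inner]
  exact real_inner_mul_inner_self_le _ _

lemma dot_add_left (x y z : Fin d → ℝ) : dot (x + y) z = dot x z + dot y z := by
  simp [dot, add_mul, Finset.sum_add_distrib]

lemma dot_sub_left (x y z : Fin d → ℝ) : dot (x - y) z = dot x z - dot y z := by
  simp [dot, sub_mul, Finset.sum_sub_distrib]

lemma dot_smul_left (c : ℝ) (x z : Fin d → ℝ) : dot (c • x) z = c * dot x z := by
  simp [dot, Finset.mul_sum, mul_assoc]

lemma dot_add_right (x y z : Fin d → ℝ) : dot x (y + z) = dot x y + dot x z := by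
  rw [dot_comm, dot_add_left, dot_comm z, dot_comm y]

lemma dot_sub_right (x y z : Fin d → ℝ) : dot x (y - z) = dot x y - dot x z := by
  rw [dot_comm, dot_sub_left, dot_comm z, dot_comm y]

lemma dot_smul_right (c : ℝ) (x z : Fin d → ℝ) : dot x (c • z) = c * dot x z := by
  rw [dot_comm, dot_smul_left, dot_comm]

lemma dot_neg_left (x z : Fin d → ℝ) : dot (-x) z = - dot x z := by
  simp [dot, Finset.sum_neg_distrib]

lemma dot_neg_right (x z : Fin d → ℝ) : dot x (-z) = - dot x z := by
  rw [dot_comm, dot_neg_left, dot_comm]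

lemma dot_zero_left (z : Fin d → ℝ) : dot 0 z = 0 := by simp [dot]

lemma dot_zero_right (z : Fin d → ℝ) : dot z 0 = 0 := by simp [dot]

lemma dot_pos {x : Fin d → ℝ} (hx : x ≠ 0) : 0 < dot x x :=
  lt_of_le_of_ne (dot_nonneg x) (fun h => hx (dot_self_eq_zero h.symm))

/-- squared-trick : if `4 * dot f f ≤ dot a a` then `2 * dot a f ≤ dot a a`. -/
lemma two_dot_le_of_sq {a f : Fin d → ℝ} (h : 4 * dot f f ≤ dot a a) :
    2 * dot a f ≤ dot a a := by
  rcases le_or_gt (2 * dot a f) 0 with h0 | h0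
  · exact h0.trans (dot_nonneg a)
  · nlinarith [dot_cs a f, dot_nonneg a, dot_nonneg f]

lemma dot_continuous (y : Fin d → ℝ) : Continuous fun x => dot x y := by
  unfold dot; fun_prop
end dotlemmas

section latt
variable {d : ℕ} {L : Set (Fin d → ℝ)}

lemma norm_le_sqrt_dot (x : Fin d → ℝ) : ‖x‖ ≤ Real.sqrt (dot x x) := by
  apply pi_norm_le_iff_of_nonneg (Real.sqrt_nonneg _) |>.mpr
  intro i
  rw [Real.norm_eq_abs, ← Real.sqrt_sq_eq_abs]
  apply Real.sqrt_le_sqrt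
  have : (x i)^2 ≤ ∑ j, x j * x j := by
    have h := Finset.single_le_sum (f := fun j => x j * x j)
      (fun j _ => mul_self_nonneg (x j)) (Finset.mem_univ i)
    simpa [sq] using h
  simpa [dot, sq] using this

lemma sq_norm_le_dot (x : Fin d → ℝ) : ‖x‖^2 ≤ dot x x := by
  have h := norm_le_sqrt_dot x
  have := Real.sq_sqrt (dot_nonneg x)
  nlinarith [norm_nonneg x, Real.sqrt_nonneg (dot x x)]

lemma dot_le_card_sq_norm (x : Fin d → ℝ) : dot x x ≤ d * ‖x‖^2 := by
  have : ∀ i, x i * x i ≤ ‖x‖^2 := by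
    intro i
    have h := norm_le_pi_norm x i
    rw [Real.norm_eq_abs] at h
    nlinarith [abs_nonneg (x i), norm_nonneg x, le_abs_self (x i), neg_abs_le (x i)]
  calc dot x x ≤ ∑ _i : Fin d, ‖x‖^2 := Finset.sum_le_sum (fun i _ => this i)
  _ = d * ‖x‖^2 := by simp [Finset.sum_const, nsmul_eq_mul]

structure LatticeFacts {d : ℕ} (L : Set (Fin d → ℝ)) : Prop where
  zero_mem : (0 : Fin d → ℝ) ∈ L
  neg_mem : ∀ a ∈ L, -a ∈ L
  sub_mem : ∀ a ∈ L, ∀ b ∈ L, a - b ∈ L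
  finball : ∀ R : ℝ, {a | a ∈ L ∧ dot a a ≤ R}.Finite
  minpos : ∃ c > 0, ∀ a ∈ L, a ≠ 0 → c ≤ dot a a
  cover : ∃ R, 0 ≤ R ∧ ∀ x, ∃ a ∈ L, dot (x - a) (x - a) ≤ R

lemma IsLattice.latticeFacts (hL : IsLattice L) : LatticeFacts L := by
  obtain ⟨B, rfl⟩ := hL
  set φ : (Fin d → ℤ) → (Fin d → ℝ) := fun z => ∑ i, (z i : ℝ) • B i with hφ
  have hsum : ∀ z w : Fin d → ℤ, φ z - φ w = φ (z - w) := by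
    intro z w
    simp only [hφ, ← Finset.sum_sub_distrib, ← sub_smul]
    congr 1; ext i j
    push_cast [Pi.smul_apply, smul_eq_mul, Pi.sub_apply, Pi.neg_apply]
    ring
  have hneg : ∀ z : Fin d → ℤ, -φ z = φ (-z) := by
    intro z
    simp only [hφ, ← Finset.sum_neg_distrib, ← neg_smul]
    congr 1; ext i j
    push_cast [Pi.smul_apply, smul_eq_mul, Pi.sub_apply, Pi.neg_apply]
    ring
  have hequiv : ∀ z : Fin d → ℤ, B.equivFun (φ z) = fun i => (z i : ℝ) := by
    intro z
    have : φ z = ∑ i, ((fun i => (z i : ℝ)) i) • B i := rfl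
    ext i
    rw [this, ← Module.Basis.equivFun_symm_apply, LinearEquiv.apply_symm_apply]
  set G : (Fin d → ℝ) →L[ℝ] (Fin d → ℝ) :=
    LinearMap.toContinuousLinearMap (B.equivFun : (Fin d → ℝ) ≃ₗ[ℝ] (Fin d → ℝ)).toLinearMap with hG
  have hGx : ∀ x, G x = B.equivFun x := fun x => rfl
  have hGn : ∀ x, ‖G x‖ ≤ ‖G‖ * ‖x‖ := fun x => G.le_opNorm x
  constructor
  · exact ⟨0, by simp [hφ]⟩
  · rintro a ⟨z, rfl⟩; exact ⟨-z, (hneg z).symm⟩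
  · rintro a ⟨z, rfl⟩ b ⟨w, rfl⟩; exact ⟨z - w, (hsum z w).symm⟩
  · -- finball
    intro R
    set M : ℝ := ‖G‖ * Real.sqrt R
    set N : ℤ := ⌈M⌉
    have hsub : {a | a ∈ Set.range φ ∧ dot a a ≤ R} ⊆
        φ '' {z : Fin d → ℤ | ∀ i, -N ≤ z i ∧ z i ≤ N} := by
      rintro a ⟨⟨z, rfl⟩, ha⟩
      refine ⟨z, fun i => ?_, rfl⟩
      have h1 : ‖φ z‖ ≤ Real.sqrt R := by
        refine (norm_le_sqrt_dot _).trans (Real.sqrt_le_sqrt ha)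
      have h2 : ‖G (φ z)‖ ≤ M := by
        calc ‖G (φ z)‖ ≤ ‖G‖ * ‖φ z‖ := hGn _
        _ ≤ ‖G‖ * Real.sqrt R := by
            exact mul_le_mul_of_nonneg_left h1 (norm_nonneg G)
      have h3 : |(z i : ℝ)| ≤ M := by
        have h5 := norm_le_pi_norm (G (φ z)) i
        rw [hGx, hequiv] at h5
        simp only [Real.norm_eq_abs] at h5
        refine h5.trans ?_
        rw [← hequiv z, ← hGx]
        exact h2
      have h4 : |(z i : ℝ)| ≤ (N : ℝ) := h3.trans (Int.le_ceil M)
      rw [abs_le] at h4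
      constructor
      · exact_mod_cast h4.1
      · exact_mod_cast h4.2
    have hfin : ({z : Fin d → ℤ | ∀ i, -N ≤ z i ∧ z i ≤ N}).Finite := by
      have : {z : Fin d → ℤ | ∀ i, -N ≤ z i ∧ z i ≤ N} ⊆
          ↑(Finset.Icc (fun _ => -N : Fin d → ℤ) (fun _ => N)) := by
        intro z hz
        simp only [Finset.coe_Icc, Set.mem_Icc]
        exact ⟨fun i => (hz i).1, fun i => (hz i).2⟩
      exact Set.Finite.subset (Finset.Icc _ _).finite_toSet this
    exact (hfin.image φ).subset hsub
  · -- minpos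
    set c : ℝ := ((max 1 ‖G‖)⁻¹)^2 with hc
    have hmaxpos : (0:ℝ) < max 1 ‖G‖ := lt_of_lt_of_le one_pos (le_max_left _ _)
    refine ⟨c, by positivity, ?_⟩
    rintro a ⟨z, rfl⟩ hne
    have hz : z ≠ 0 := by rintro rfl; exact hne (by simp [hφ])
    obtain ⟨i, hi⟩ := Function.ne_iff.mp hz
    have h1 : (1:ℝ) ≤ |(z i : ℝ)| := by
      have : (1:ℤ) ≤ |z i| := Int.one_le_abs (by simpa using hi)
      calc (1:ℝ) ≤ ((|z i| : ℤ) : ℝ) := by exact_mod_cast this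
      _ = |(z i : ℝ)| := by push_cast; ring
    have h2 : (1:ℝ) ≤ ‖G (φ z)‖ := by
      have h5 := norm_le_pi_norm (G (φ z)) i
      rw [hGx, hequiv] at h5
      simp only [Real.norm_eq_abs] at h5
      refine h1.trans (h5.trans ?_)
      rw [← hequiv z, ← hGx]
    have h3 : (1:ℝ) ≤ (max 1 ‖G‖) * ‖φ z‖ := by
      calc (1:ℝ) ≤ ‖G‖ * ‖φ z‖ := h2.trans (hGn _)
      _ ≤ (max 1 ‖G‖) * ‖φ z‖ :=
          mul_le_mul_of_nonneg_right (le_max_right _ _) (norm_nonneg _)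
    have h4 : (max 1 ‖G‖)⁻¹ ≤ ‖φ z‖ := by
      rw [inv_le_iff_one_le_mul₀ hmaxpos] at *
      linarith [h3]
    calc c ≤ ‖φ z‖^2 := by
          rw [hc]; apply pow_le_pow_left₀ (by positivity) h4
    _ ≤ dot (φ z) (φ z) := sq_norm_le_dot _
  · -- cover
    refine ⟨d * ((∑ i, ‖B i‖) / 2)^2, by positivity, ?_⟩
    intro x
    set z : Fin d → ℤ := fun i => round (B.equivFun x i) with hz
    refine ⟨φ z, ⟨z, rfl⟩, ?_⟩
    have hx : x = ∑ i, B.equivFun x i • B i := (B.sum_equivFun x).symm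
    have hdiff : x - φ z = ∑ i, (B.equivFun x i - (z i : ℝ)) • B i := by
      rw [hφ]; nth_rewrite 1 [hx]
      rw [← Finset.sum_sub_distrib]
      congr 1; ext i; rw [sub_smul]
    have hnorm : ‖x - φ z‖ ≤ (∑ i, ‖B i‖) / 2 := by
      rw [hdiff]
      calc ‖∑ i, (B.equivFun x i - (z i : ℝ)) • B i‖
          ≤ ∑ i, ‖(B.equivFun x i - (z i : ℝ)) • B i‖ := norm_sum_le _ _
      _ ≤ ∑ i, (1/2) * ‖B i‖ := by
          apply Finset.sum_le_sum
          intro i _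
          rw [norm_smul, Real.norm_eq_abs]
          apply mul_le_mul_of_nonneg_right _ (norm_nonneg _)
          simpa [hz] using abs_sub_round (B.equivFun x i)
      _ = (∑ i, ‖B i‖) / 2 := by rw [← Finset.mul_sum]; ring
    calc dot (x - φ z) (x - φ z) ≤ d * ‖x - φ z‖^2 := dot_le_card_sq_norm _
    _ ≤ d * ((∑ i, ‖B i‖) / 2)^2 := by
        apply mul_le_mul_of_nonneg_left _ (by positivity)
        apply pow_le_pow_left₀ (norm_nonneg _) hnorm
end latt

section vor
variable {d : ℕ} {L : Set (Fin d → ℝ)}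

lemma dot_sub_expand (x a : Fin d → ℝ) :
    dot (x - a) (x - a) = dot x x - 2 * dot a x + dot a a := by
  rw [dot_sub_left, dot_sub_right, dot_sub_right, dot_comm x a]; ring

lemma mem_voronoi_iff {x : Fin d → ℝ} :
    x ∈ voronoiCell L ↔ ∀ a ∈ L, 2 * dot a x ≤ dot a a := by
  constructor
  · intro h a ha; have := h a ha; rw [dot_sub_expand] at this; linarith
  · intro h a ha; rw [dot_sub_expand]; have := h a ha; linarith

lemma voronoi_convex : Convex ℝ (voronoiCell L) := by
  intro x hx y hy α β hα hβ hs
  rw [mem_voronoi_iff] at *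
  intro a ha
  have hx' := hx a ha; have hy' := hy a ha
  rw [dot_add_right, dot_smul_right, dot_smul_right]
  have h1 := mul_le_mul_of_nonneg_left hx' hα
  have h2 := mul_le_mul_of_nonneg_left hy' hβ
  have h3 : (α + β) * dot a a = dot a a := by rw [hs, one_mul]
  nlinarith [h1, h2, h3]

lemma voronoi_closed : IsClosed (voronoiCell L) := by
  have : voronoiCell L = ⋂ a ∈ L, {x | 2 * dot a x ≤ dot a a} := by
    ext x; simp only [Set.mem_iInter, Set.mem_setOf_eq, ← mem_voronoi_iff]
  rw [this]
  refine isClosed_biInter (fun a _ => ?_)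
  have hc : Continuous fun x : Fin d → ℝ => 2 * dot a x := by
    have : (fun x : Fin d → ℝ => 2 * dot a x) = fun x => 2 * dot x a := by
      funext x; rw [dot_comm]
    rw [this]; exact continuous_const.mul (dot_continuous a)
  exact isClosed_le hc continuous_const

lemma voronoi_zero_mem : (0 : Fin d → ℝ) ∈ voronoiCell L := by
  rw [mem_voronoi_iff]; intro a _; rw [dot_zero_right]
  simpa using dot_nonneg a

lemma voronoi_symm (hF : LatticeFacts L) {x : Fin d → ℝ} (hx : x ∈ voronoiCell L) :
    -x ∈ voronoiCell L := by
  rw [mem_voronoi_iff] at *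
  intro a ha
  have := hx (-a) (hF.neg_mem a ha)
  rw [dot_neg_left, dot_neg_left, dot_neg_right, neg_neg] at this
  rw [dot_neg_right]
  linarith

lemma voronoi_dot_bound (hF : LatticeFacts L) :
    ∃ R : ℝ, 0 ≤ R ∧ ∀ x ∈ voronoiCell L, dot x x ≤ R := by
  obtain ⟨R, hR0, hR⟩ := hF.cover
  refine ⟨R, hR0, fun x hx => ?_⟩
  obtain ⟨a, ha, haR⟩ := hR x
  exact (hx a ha).trans haR

lemma voronoi_compact (hF : LatticeFacts L) : IsCompact (voronoiCell L) := by
  obtain ⟨R, hR0, hR⟩ := voronoi_dot_bound hF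
  apply Metric.isCompact_of_isClosed_isBounded voronoi_closed
  apply Bornology.IsBounded.subset (Metric.isBounded_closedBall (x := (0 : Fin d → ℝ)) (r := Real.sqrt R))
  intro x hx
  rw [Metric.mem_closedBall, dist_zero_right]
  exact (norm_le_sqrt_dot x).trans (Real.sqrt_le_sqrt (hR x hx))

lemma voronoi_zero_interior (hF : LatticeFacts L) :
    (0 : Fin d → ℝ) ∈ interior (voronoiCell L) := by
  obtain ⟨c, hc, hmin⟩ := hF.minpos
  set r : ℝ := Real.sqrt (c / (4 * (d + 1))) with hr
  have hrpos : 0 < r := Real.sqrt_pos.mpr (by positivity)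
  apply mem_interior.mpr
  refine ⟨Metric.ball 0 r, ?_, Metric.isOpen_ball, Metric.mem_ball_self hrpos⟩
  intro x hx
  rw [Metric.mem_ball, dist_zero_right] at hx
  rw [mem_voronoi_iff]
  intro a ha
  rcases eq_or_ne a 0 with rfl | hane
  · simp [dot_zero_left, dot_nonneg]
  · have h1 : dot x x ≤ d * ‖x‖^2 := dot_le_card_sq_norm x
    have h2 : ‖x‖^2 ≤ c / (4 * (d + 1)) := by
      have := Real.sq_sqrt (le_of_lt (show (0:ℝ) < c / (4 * (d+1)) by positivity))
      nlinarith [norm_nonneg x, hrpos]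
    have h3 : 4 * dot x x ≤ c := by
      have hd : (d : ℝ) ≥ 0 := Nat.cast_nonneg d
      have : (d:ℝ) * ‖x‖^2 ≤ (d:ℝ) * (c / (4 * (d+1))) :=
        mul_le_mul_of_nonneg_left h2 hd
      have hfin : (d:ℝ) * (c / (4 * ((d:ℝ)+1))) ≤ c / 4 := by
        have h4 : (0:ℝ) < 4 * ((d:ℝ)+1) := by positivity
        rw [mul_div_assoc', div_le_div_iff₀ h4 (by norm_num : (0:ℝ) < 4)]
        nlinarith [hc.le, hd]
      linarith
    exact two_dot_le_of_sq (h3.trans (hmin a ha hane))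

lemma voronoi_isBody (hF : LatticeFacts L) : IsConvexBody (voronoiCell L) :=
  ⟨voronoi_convex, voronoi_compact hF, ⟨0, voronoi_zero_interior hF⟩⟩
end vor

section polar
variable {d : ℕ} {L : Set (Fin d → ℝ)}

lemma polar_convex (K : Set (Fin d → ℝ)) : Convex ℝ (polarBody K) := by
  intro y hy z hz α β hα hβ hs
  intro x hx
  have h1 := hy x hx; have h2 := hz x hx
  rw [dot_add_right, dot_smul_right, dot_smul_right]
  have := mul_le_mul_of_nonneg_left h1 hα
  have := mul_le_mul_of_nonneg_left h2 hβ
  nlinarith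

lemma polar_closed (K : Set (Fin d → ℝ)) : IsClosed (polarBody K) := by
  have : polarBody K = ⋂ x ∈ K, {y | dot x y ≤ 1} := by
    ext y; simp only [Set.mem_iInter, Set.mem_setOf_eq]; rfl
  rw [this]
  refine isClosed_biInter (fun x _ => ?_)
  have hc : Continuous fun y : Fin d → ℝ => dot x y := by
    have : (fun y : Fin d → ℝ => dot x y) = fun y => dot y x := by
      funext y; rw [dot_comm]
    rw [this]; exact dot_continuous x
  exact isClosed_le hc continuous_const

lemma voronoi_small (hF : LatticeFacts L) :
    ∃ ρ > 0, ∀ x : Fin d → ℝ, dot x x ≤ ρ → x ∈ voronoiCell L := by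
  obtain ⟨c, hc, hmin⟩ := hF.minpos
  refine ⟨c / 4, by positivity, fun x hx => ?_⟩
  rw [mem_voronoi_iff]
  intro a ha
  rcases eq_or_ne a 0 with rfl | hane
  · simp [dot_zero_left, dot_nonneg]
  · exact two_dot_le_of_sq (by linarith [hmin a ha hane])

lemma polar_voronoi_dot_bound (hF : LatticeFacts L) :
    ∃ S : ℝ, 0 < S ∧ ∀ y ∈ polarBody (voronoiCell L), dot y y ≤ S := by
  obtain ⟨ρ, hρ, hsmall⟩ := voronoi_small hF
  refine ⟨1 / ρ, by positivity, fun y hy => ?_⟩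
  rcases eq_or_ne y 0 with rfl | hne
  · simp [dot_zero_left]; positivity
  · have hyy : 0 < dot y y := dot_pos hne
    set t : ℝ := Real.sqrt ρ / Real.sqrt (dot y y) with ht
    have htpos : 0 < t := by positivity
    have hx : (t • y) ∈ voronoiCell L := by
      apply hsmall
      rw [dot_smul_left, dot_smul_right]
      have hs1 : Real.sqrt ρ * Real.sqrt ρ = ρ := Real.mul_self_sqrt hρ.le
      have hs2 : Real.sqrt (dot y y) * Real.sqrt (dot y y) = dot y y :=
        Real.mul_self_sqrt hyy.le
      have hsne : Real.sqrt (dot y y) ≠ 0 := by positivity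
      have h1 : t * (t * dot y y) = ρ := by
        rw [ht]; field_simp; nlinarith [hs1, hs2]
      rw [h1]
    have h2 := hy (t • y) hx
    rw [dot_smul_left] at h2
    -- t * dot y y = sqrt ρ * sqrt (dot y y)
    have hs2 : Real.sqrt (dot y y) * Real.sqrt (dot y y) = dot y y :=
      Real.mul_self_sqrt hyy.le
    have hsne : Real.sqrt (dot y y) ≠ 0 := by positivity
    have h3 : t * dot y y = Real.sqrt ρ * Real.sqrt (dot y y) := by
      rw [ht]; field_simp; rw [Real.sq_sqrt hyy.le]
    rw [h3] at h2
    have h4 : Real.sqrt (dot y y) ≤ 1 / Real.sqrt ρ := by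
      rw [le_div_iff₀ (Real.sqrt_pos.mpr hρ)]
      linarith [mul_comm (Real.sqrt ρ) (Real.sqrt (dot y y))]
    have h5 : dot y y ≤ (1 / Real.sqrt ρ)^2 := by
      have := Real.sq_sqrt hyy.le
      nlinarith [Real.sqrt_nonneg (dot y y)]
    have h6 : (1 / Real.sqrt ρ)^2 = 1 / ρ := by
      rw [div_pow, one_pow, Real.sq_sqrt hρ.le]
    rw [h6] at h5; exact h5

lemma polar_voronoi_compact (hF : LatticeFacts L) :
    IsCompact (polarBody (voronoiCell L)) := by
  obtain ⟨S, hS, hSb⟩ := polar_voronoi_dot_bound hF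
  apply Metric.isCompact_of_isClosed_isBounded (polar_closed _)
  apply Bornology.IsBounded.subset (Metric.isBounded_closedBall (x := (0 : Fin d → ℝ)) (r := Real.sqrt S))
  intro y hy
  rw [Metric.mem_closedBall, dist_zero_right]
  exact (norm_le_sqrt_dot y).trans (Real.sqrt_le_sqrt (hSb y hy))

lemma polar_voronoi_zero_interior (hF : LatticeFacts L) :
    (0 : Fin d → ℝ) ∈ interior (polarBody (voronoiCell L)) := by
  obtain ⟨R, hR0, hRb⟩ := voronoi_dot_bound hF
  set ρ : ℝ := 1 / ((R + 1) * (d + 1)) with hρdef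
  have hρ : 0 < ρ := by positivity
  set r : ℝ := Real.sqrt ρ with hr
  have hrpos : 0 < r := Real.sqrt_pos.mpr hρ
  apply mem_interior.mpr
  refine ⟨Metric.ball 0 r, ?_, Metric.isOpen_ball, Metric.mem_ball_self hrpos⟩
  intro y hy
  rw [Metric.mem_ball, dist_zero_right] at hy
  intro x hx
  have h1 : dot y y ≤ (d:ℝ) * ‖y‖^2 := dot_le_card_sq_norm y
  have h2 : ‖y‖^2 ≤ ρ := by
    have := Real.sq_sqrt hρ.le
    nlinarith [norm_nonneg y, hrpos]
  have h3 : dot y y ≤ 1 / (R + 1) := by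
    have hd0 : (0:ℝ) ≤ (d:ℝ) := Nat.cast_nonneg d
    have : (d:ℝ) * ρ ≤ 1 / (R+1) := by
      rw [hρdef, mul_one_div, div_le_div_iff₀ (by positivity) (by positivity)]
      nlinarith [hR0, hd0]
    nlinarith
  have h4 : dot x x ≤ R + 1 := by linarith [hRb x hx]
  have h5 : dot x y * dot x y ≤ 1 := by
    calc dot x y * dot x y ≤ dot x x * dot y y := dot_cs x y
    _ ≤ (R + 1) * (1 / (R + 1)) := by
        apply mul_le_mul h4 h3 (dot_nonneg y) (by positivity)
    _ = 1 := by field_simp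
  nlinarith [h5, dot_nonneg x, dot_nonneg y]

lemma polar_voronoi_isBody (hF : LatticeFacts L) :
    IsConvexBody (polarBody (voronoiCell L)) :=
  ⟨polar_convex _, polar_voronoi_compact hF, ⟨0, polar_voronoi_zero_interior hF⟩⟩

lemma polar_voronoi_symm (hF : LatticeFacts L) {y : Fin d → ℝ}
    (hy : y ∈ polarBody (voronoiCell L)) : -y ∈ polarBody (voronoiCell L) := by
  intro x hx
  rw [dot_neg_right]
  have := hy (-x) (voronoi_symm hF hx)
  rw [dot_neg_left] at this
  linarith
end polar

section lemA
variable {d : ℕ} {L : Set (Fin d → ℝ)}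

lemma violator_exists {x : Fin d → ℝ} (hx : x ∉ voronoiCell L) :
    ∃ a ∈ L, a ≠ 0 ∧ dot a a < 2 * dot a x := by
  rw [mem_voronoi_iff] at hx
  push_neg at hx
  obtain ⟨a, ha, hlt⟩ := hx
  refine ⟨a, ha, ?_, hlt⟩
  rintro rfl
  rw [dot_zero_left, dot_zero_left] at hlt
  simp at hlt

lemma min_violator (hF : LatticeFacts L) {x : Fin d → ℝ} (hx : x ∉ voronoiCell L) :
    ∃ v, v ∈ L ∧ v ≠ 0 ∧ dot v v < 2 * dot v x ∧
      ∀ a ∈ L, a ≠ 0 → dot a a < 2 * dot a x → dot v v ≤ dot a a := by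
  set S : Set (Fin d → ℝ) := {a | a ∈ L ∧ (a ≠ 0 ∧ dot a a < 2 * dot a x)} with hS
  have hbound : ∀ a ∈ S, dot a a ≤ 4 * dot x x := by
    rintro a ⟨haL, hane, hviol⟩
    have h0 : 0 < dot a a := dot_pos hane
    have h1 : 0 < dot a x := by linarith
    nlinarith [dot_cs a x, dot_nonneg x]
  have hfin : S.Finite := (hF.finball (4 * dot x x)).subset
    (fun a ha => ⟨ha.1, hbound a ha⟩)
  obtain ⟨a0, ha0L, ha0ne, ha0viol⟩ := violator_exists hx
  have hne : hfin.toFinset.Nonempty := ⟨a0, hfin.mem_toFinset.mpr ⟨ha0L, ha0ne, ha0viol⟩⟩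
  obtain ⟨v, hvmem, hvmin⟩ := Finset.exists_min_image hfin.toFinset (fun a => dot a a) hne
  rw [Set.Finite.mem_toFinset] at hvmem
  obtain ⟨hvL, hvne, hvviol⟩ := hvmem
  refine ⟨v, hvL, hvne, hvviol, fun a haL hane haviol => ?_⟩
  exact hvmin a (hfin.mem_toFinset.mpr ⟨haL, hane, haviol⟩)

lemma min_violator_key (hF : LatticeFacts L) {x v : Fin d → ℝ}
    (hvL : v ∈ L) (hvne : v ≠ 0) (hviol : dot v v < 2 * dot v x)
    (hmin : ∀ a ∈ L, a ≠ 0 → dot a a < 2 * dot a x → dot v v ≤ dot a a)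
    {a : Fin d → ℝ} (haL : a ∈ L) (hane : a ≠ 0) (hav : a ≠ v) :
    dot a v < dot a a := by
  by_contra hcon
  push_neg at hcon  -- dot a a ≤ dot a v
  set b : Fin d → ℝ := v - a with hb
  have hbL : b ∈ L := hF.sub_mem v hvL a haL
  have hbne : b ≠ 0 := by
    rw [hb, sub_ne_zero]; exact fun h => hav h.symm
  have hQa : 0 < dot a a := dot_pos hane
  have hQb : 0 < dot b b := dot_pos hbne
  have hQbexp : dot b b = dot v v - 2 * dot a v + dot a a := dot_sub_expand v a
  have hsumQ : dot a a + dot b b ≤ dot v v := by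
    rw [hQbexp]; linarith
  have hbx : dot b x = dot v x - dot a x := dot_sub_left v a x
  have hcases : dot a a < 2 * dot a x ∨ dot b b < 2 * dot b x := by
    by_contra hc
    push_neg at hc
    obtain ⟨h1, h2⟩ := hc
    rw [hbx] at h2
    linarith
  rcases hcases with hca | hcb
  · have := hmin a haL hane hca
    linarith
  · have := hmin b hbL hbne hcb
    have hbv : dot b v = dot v v - dot a v := by
      rw [hb, dot_sub_left]
    linarith

lemma lemmaA (hF : LatticeFacts L) {x : Fin d → ℝ} (hx : x ∉ voronoiCell L) :
    ∃ (v f : Fin d → ℝ) (ε μ : ℝ), IsPrimitiveVec L v ∧ 0 < ε ∧ 0 < μ ∧ μ < 1 ∧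
      f ∈ voronoiCell L ∧ ((1:ℝ)/2) • v ∈ voronoiCell L ∧
      ((1:ℝ)/2 + ε) • v = μ • x + (1 - μ) • f := by
  obtain ⟨v, hvL, hvne, hviol, hmin⟩ := min_violator hF hx
  have hkey := fun {a} haL hane hav =>
    min_violator_key hF hvL hvne hviol hmin (a := a) haL hane hav
  have hQv : 0 < dot v v := dot_pos hvne
  -- primitivity
  have hprim : IsPrimitiveVec L v := by
    refine ⟨hvL, hvne, fun t ht0 ht1 htv => ?_⟩
    have htvne : t • v ≠ 0 := smul_ne_zero (ne_of_gt ht0) hvne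
    have hdx : 0 < dot v x := by linarith
    have hviol' : dot (t • v) (t • v) < 2 * dot (t • v) x := by
      rw [dot_smul_left, dot_smul_right, dot_smul_left]
      have k1 : t * (t * dot v v) < t * dot v v := by
        nlinarith [mul_pos (mul_pos (sub_pos.mpr ht1) ht0) hQv]
      have k2 : t * dot v v < 2 * (t * dot v x) := by
        nlinarith [mul_lt_mul_of_pos_left hviol ht0]
      linarith
    have := hmin (t • v) htv htvne hviol'
    rw [dot_smul_left, dot_smul_right] at this
    have k3 : t * t < 1 := by nlinarith
    nlinarith [mul_lt_mul_of_pos_right k3 hQv]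
  -- v/2 ∈ V
  have hhalf : ((1:ℝ)/2) • v ∈ voronoiCell L := by
    rw [mem_voronoi_iff]
    intro a haL
    rw [dot_smul_right]
    rcases eq_or_ne a 0 with rfl | hane
    · simp [dot_zero_left]
    rcases eq_or_ne a v with rfl | hav
    · linarith
    · have := hkey haL hane hav
      linarith
  -- the construction
  obtain ⟨D, hD⟩ : ∃ D : ℝ, D = dot v x - dot v v / 2 := ⟨_, rfl⟩
  have hDpos : 0 < D := by rw [hD]; linarith
  have hDne : D ≠ 0 := ne_of_gt hDpos
  obtain ⟨u, hu⟩ : ∃ u : Fin d → ℝ, u = v - (dot v v / D) • (x - ((1:ℝ)/2) • v) := ⟨_, rfl⟩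
  have hQu : 0 ≤ dot u u := dot_nonneg u
  have hvu : dot v u = 0 := by
    rw [hu, dot_sub_right, dot_smul_right, dot_sub_right, dot_smul_right]
    have hDD : dot v x - 1/2 * dot v v = D := by rw [hD]; ring
    rw [hDD]
    field_simp
    ring
  obtain ⟨QF, hQF⟩ : ∃ QF : ℝ, QF = dot v v / 4 + dot u u + 1 := ⟨_, rfl⟩
  have hQFpos : 0 < QF := by rw [hQF]; nlinarith
  obtain ⟨T, hT⟩ : ∃ T : Finset (Fin d → ℝ),
      T = ((hF.finball (4 * QF)).toFinset.erase 0).erase v := ⟨_, rfl⟩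
  have hTprop : ∀ a ∈ T, a ∈ L ∧ a ≠ 0 ∧ a ≠ v ∧ dot a a ≤ 4 * QF := by
    intro a ha
    rw [hT, Finset.mem_erase, Finset.mem_erase, Set.Finite.mem_toFinset] at ha
    exact ⟨ha.2.2.1, ha.2.1, ha.1, ha.2.2.2⟩
  have hTmem : ∀ a, a ∈ L → a ≠ 0 → a ≠ v → dot a a ≤ 4 * QF → a ∈ T := by
    intro a h1 h2 h3 h4
    rw [hT, Finset.mem_erase, Finset.mem_erase, Set.Finite.mem_toFinset]
    exact ⟨h3, h2, h1, h4⟩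
  obtain ⟨δ, hδpos, hδle⟩ : ∃ δ : ℝ, 0 < δ ∧ ∀ a ∈ T, δ ≤ dot a a - dot a v := by
    rcases Finset.eq_empty_or_nonempty T with hTe | hTne
    · exact ⟨1, one_pos, by simp [hTe]⟩
    · refine ⟨T.inf' hTne (fun a => dot a a - dot a v), ?_, ?_⟩
      · obtain ⟨a, ha, hga⟩ := Finset.exists_mem_eq_inf' hTne (fun a => dot a a - dot a v)
        rw [hga]
        obtain ⟨haL, hane, hav, _⟩ := hTprop a ha
        have := hkey haL hane hav
        linarith
      · intro a ha; exact Finset.inf'_le _ ha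
  obtain ⟨Mb, hMb⟩ : ∃ Mb : ℝ, Mb = Real.sqrt (4 * QF * dot u u) := ⟨_, rfl⟩
  have hMbnn : 0 ≤ Mb := hMb ▸ Real.sqrt_nonneg _
  have hMbbound : ∀ a ∈ T, |dot a u| ≤ Mb := by
    intro a ha
    obtain ⟨_, _, _, haQ⟩ := hTprop a ha
    rw [hMb, ← Real.sqrt_sq_eq_abs]
    apply Real.sqrt_le_sqrt
    have := dot_cs a u
    nlinarith [dot_nonneg a]
  obtain ⟨ε, hε⟩ : ∃ ε : ℝ,
      ε = min (min (D / (2 * dot v v)) ((1:ℝ)/4)) (δ / (4 * (Mb + 1))) := ⟨_, rfl⟩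
  have hMb1 : (0:ℝ) < 4 * (Mb + 1) := by nlinarith
  have hεpos : 0 < ε := by
    rw [hε]
    exact lt_min (lt_min (div_pos hDpos (by nlinarith)) (by norm_num))
      (div_pos hδpos hMb1)
  have hε1 : ε ≤ D / (2 * dot v v) := hε ▸ le_trans (min_le_left _ _) (min_le_left _ _)
  have hε2 : ε ≤ 1/4 := hε ▸ le_trans (min_le_left _ _) (min_le_right _ _)
  have hε3 : ε ≤ δ / (4 * (Mb + 1)) := hε ▸ min_le_right _ _
  obtain ⟨μ, hμ⟩ : ∃ μ : ℝ, μ = ε * dot v v / D := ⟨_, rfl⟩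
  have hμpos : 0 < μ := by rw [hμ]; exact div_pos (mul_pos hεpos hQv) hDpos
  have hε1' : ε * (2 * dot v v) ≤ D := by
    rw [le_div_iff₀ (by nlinarith)] at hε1; linarith
  have hμhalf : μ ≤ 1/2 := by
    rw [hμ, div_le_iff₀ hDpos]
    nlinarith
  have hμlt1 : μ < 1 := by linarith
  have h1μpos : 0 < 1 - μ := by linarith
  have h1μne : (1:ℝ) - μ ≠ 0 := ne_of_gt h1μpos
  obtain ⟨s, hs⟩ : ∃ s : ℝ, s = ε / (1 - μ) := ⟨_, rfl⟩
  have hspos : 0 < s := by rw [hs]; exact div_pos hεpos h1μpos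
  have hs2ε : s ≤ 2 * ε := by
    rw [hs, div_le_iff₀ h1μpos]
    nlinarith
  have hs1 : s ≤ 1 := by nlinarith
  obtain ⟨f, hf⟩ : ∃ f : Fin d → ℝ, f = ((1:ℝ)/2) • v + s • u := ⟨_, rfl⟩
  have hQf : dot f f ≤ QF := by
    have hexp : dot f f = dot v v / 4 + s * s * dot u u := by
      rw [hf]
      simp only [dot_add_left, dot_add_right, dot_smul_left, dot_smul_right]
      rw [dot_comm u v, hvu]
      ring
    rw [hexp, hQF]
    have hss : s * s ≤ 1 := mul_le_one₀ hs1 hspos.le hs1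
    linarith [mul_le_mul_of_nonneg_right hss hQu]
  have hfV : f ∈ voronoiCell L := by
    rw [mem_voronoi_iff]
    intro a haL
    have hdaf : dot a f = (1/2) * dot a v + s * dot a u := by
      rw [hf, dot_add_right, dot_smul_right, dot_smul_right]
    rcases eq_or_ne a 0 with rfl | hane
    · simp [dot_zero_left]
    rcases eq_or_ne a v with heq | hav
    · rw [heq, hf, dot_add_right, dot_smul_right, dot_smul_right, hvu]
      linarith
    by_cases haQ : dot a a ≤ 4 * QF
    · have haT : a ∈ T := hTmem a haL hane hav haQ
      have h1 := hδle a haT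
      have h2 := hMbbound a haT
      have h3 : s * dot a u ≤ 2 * ε * (Mb + 1) := by
        have h3a : s * dot a u ≤ s * |dot a u| :=
          mul_le_mul_of_nonneg_left (le_abs_self _) hspos.le
        have h3b : s * |dot a u| ≤ (2 * ε) * (Mb + 1) :=
          mul_le_mul hs2ε (h2.trans (by linarith)) (abs_nonneg _) (by linarith)
        linarith
      have h5 : 2 * ε * (Mb + 1) ≤ δ / 2 := by
        rw [le_div_iff₀ hMb1] at hε3
        linarith
      rw [hdaf]
      linarith
    · push_neg at haQ
      apply two_dot_le_of_sq
      linarith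
  refine ⟨v, f, ε, μ, hprim, hεpos, hμpos, hμlt1, hfV, hhalf, ?_⟩
  have hμ' : μ * D = ε * dot v v := by rw [hμ]; field_simp
  have hs' : s * (1 - μ) = ε := by rw [hs]; field_simp
  rw [hf, hu]
  match_scalars
  · field_simp
    linear_combination -(2*D + dot v v) * hs' + hμ'
  · field_simp
    linear_combination (dot v v) * hs' - hμ'
end lemA

section dual
variable {d : ℕ} {L : Set (Fin d → ℝ)}

lemma dot_sum_left' (s : Finset (Fin d)) (g : Fin d → (Fin d → ℝ)) (w : Fin d → ℝ) :
    dot (∑ i ∈ s, g i) w = ∑ i ∈ s, dot (g i) w :=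
  map_sum (AddMonoidHom.mk' (fun x => dot x w) (fun a b => dot_add_left a b w)) g s

lemma subset_bidual (x : Fin d → ℝ) (hx : x ∈ L) :
    x ∈ dualLattice (dualLattice L) := by
  intro y hy
  obtain ⟨n, hn⟩ := hy x hx
  exact ⟨n, by rw [dot_comm]; exact hn⟩

lemma bidual_subset (hL : IsLattice L) :
    dualLattice (dualLattice L) ⊆ L := by
  obtain ⟨B, hB⟩ := hL
  -- the coordinate map w ↦ (dot (B i) w)_i is bijective
  set M : (Fin d → ℝ) →ₗ[ℝ] (Fin d → ℝ) :=
    { toFun := fun w => fun i => dot (B i) w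
      map_add' := by intro a b; funext i; exact dot_add_right _ _ _
      map_smul' := by intro c a; funext i; simp [dot_smul_right] } with hM
  have hMinj : Function.Injective M := by
    rw [← LinearMap.ker_eq_bot, LinearMap.ker_eq_bot']
    intro w hw
    have hw' : ∀ i, dot (B i) w = 0 := fun i => congrFun hw i
    have hww : dot w w = 0 := by
      have hwrep : w = ∑ i, B.equivFun w i • B i := (B.sum_equivFun w).symm
      calc dot w w = dot (∑ i, B.equivFun w i • B i) w := by rw [← hwrep]
      _ = ∑ i, B.equivFun w i * dot (B i) w := by
          rw [dot_sum_left']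
          exact Finset.sum_congr rfl (fun i _ => dot_smul_left _ _ _)
      _ = 0 := by simp [hw']
    exact dot_self_eq_zero hww
  have hMsurj : Function.Surjective M := LinearMap.injective_iff_surjective.mp hMinj
  -- dual basis vectors
  have hbstar : ∀ j : Fin d, ∃ b : Fin d → ℝ, ∀ i, dot (B i) b = if i = j then 1 else 0 := by
    intro j
    obtain ⟨b, hb⟩ := hMsurj (Pi.single j 1)
    refine ⟨b, fun i => ?_⟩
    have := congrFun hb i
    rw [hM] at this
    simpa [Pi.single_apply] using this
  choose bstar hbstar using hbstar
  -- each bstar j belongs to the dual lattice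
  have hbdual : ∀ j, bstar j ∈ dualLattice L := by
    intro j x hx
    rw [hB] at hx
    obtain ⟨z, rfl⟩ := hx
    refine ⟨z j, ?_⟩
    rw [dot_sum_left']
    rw [Finset.sum_congr rfl (fun i _ => dot_smul_left _ _ _)]
    have : ∀ i ∈ Finset.univ, (z i : ℝ) * dot (B i) (bstar j)
        = if i = j then (z i : ℝ) else 0 := by
      intro i _
      rw [hbstar j i]
      split_ifs <;> simp
    rw [Finset.sum_congr rfl this, Finset.sum_ite_eq' Finset.univ j _]
    simp
  -- now take y in the double dual
  intro y hy
  have hcoord : ∀ j, ∃ n : ℤ, B.equivFun y j = (n : ℝ) := by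
    intro j
    obtain ⟨n, hn⟩ := hy (bstar j) (hbdual j)
    refine ⟨n, ?_⟩
    rw [← hn]
    have hyrep : y = ∑ i, B.equivFun y i • B i := (B.sum_equivFun y).symm
    have h1 : ∀ i ∈ Finset.univ, B.equivFun y i * dot (B i) (bstar j)
        = if i = j then B.equivFun y i else 0 := by
      intro i _
      rw [hbstar j i]
      split_ifs <;> simp
    calc B.equivFun y j = ∑ i, B.equivFun y i * dot (B i) (bstar j) := by
          rw [Finset.sum_congr rfl h1, Finset.sum_ite_eq' Finset.univ j _]
          simp
    _ = dot (∑ i, B.equivFun y i • B i) (bstar j) := by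
          rw [dot_sum_left']
          exact (Finset.sum_congr rfl (fun i _ => dot_smul_left _ _ _)).symm
    _ = dot y (bstar j) := by rw [← hyrep]
    _ = dot (bstar j) y := dot_comm _ _
  choose n hn using hcoord
  rw [hB]
  refine ⟨n, ?_⟩
  have hyrep : y = ∑ i, B.equivFun y i • B i := (B.sum_equivFun y).symm
  rw [hyrep]
  exact Finset.sum_congr rfl (fun i _ => by rw [hn i])

lemma lattice_nonzero_vec (hL : IsLattice L) (hd : d ≠ 0) : ∃ w ∈ L, w ≠ 0 := by
  obtain ⟨B, hB⟩ := hL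
  have i0 : Fin d := ⟨0, Nat.pos_of_ne_zero hd⟩
  refine ⟨B i0, ?_, B.ne_zero i0⟩
  rw [hB]
  refine ⟨Pi.single i0 1, ?_⟩
  have : ∀ i ∈ Finset.univ, (((Pi.single i0 1 : Fin d → ℤ) i : ℤ) : ℝ) • B i
      = if i = i0 then B i0 else 0 := by
    intro i _
    rcases eq_or_ne i i0 with rfl | hne
    · simp
    · simp [Pi.single_apply, hne]
  show (∑ i, (((Pi.single i0 1 : Fin d → ℤ) i : ℤ) : ℝ) • B i) = B i0
  rw [Finset.sum_congr rfl this, Finset.sum_ite_eq' Finset.univ i0 _]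
  simp
end dual

section widths
variable {d : ℕ} {L : Set (Fin d → ℝ)}

lemma Qdiff_le (p q : Fin d → ℝ) :
    dot (p - q) (p - q) ≤ 2 * dot p p + 2 * dot q q := by
  have h := dot_nonneg (q - (-p))
  rw [dot_sub_expand, dot_neg_left, dot_neg_left, dot_neg_right, neg_neg] at h
  rw [dot_sub_expand, dot_comm q p]
  linarith

lemma compact_dot_bound {C : Set (Fin d → ℝ)} (hC : IsCompact C) :
    ∃ S : ℝ, 0 ≤ S ∧ ∀ x ∈ C, dot x x ≤ S := by
  obtain ⟨R, hR⟩ := hC.isBounded.subset_closedBall 0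
  refine ⟨(d:ℝ) * R^2, by positivity, fun x hx => ?_⟩
  have h1 : ‖x‖ ≤ R := by
    have := hR hx
    rwa [Metric.mem_closedBall, dist_zero_right] at this
  calc dot x x ≤ (d:ℝ) * ‖x‖^2 := dot_le_card_sq_norm x
  _ ≤ (d:ℝ) * R^2 := by
      apply mul_le_mul_of_nonneg_left _ (Nat.cast_nonneg d)
      exact pow_le_pow_left₀ (norm_nonneg x) h1 2

lemma widthSet_bddAbove {C : Set (Fin d → ℝ)} {S : ℝ} (hS : ∀ x ∈ C, dot x x ≤ S)
    (y : Fin d → ℝ) : BddAbove {r | ∃ a ∈ C, ∃ b ∈ C, r = dot y (a - b)} := by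
  refine ⟨Real.sqrt (dot y y * (4 * S)), ?_⟩
  rintro r ⟨a, ha, b, hb, rfl⟩
  have h1 : dot (a-b) (a-b) ≤ 4 * S := by
    have h2 := Qdiff_le a b; have h3 := hS a ha; have h4 := hS b hb; linarith
  have h2 : dot y (a-b) ≤ |dot y (a-b)| := le_abs_self _
  rw [← Real.sqrt_sq_eq_abs] at h2
  refine h2.trans (Real.sqrt_le_sqrt ?_)
  nlinarith [dot_cs y (a-b), dot_nonneg y, dot_nonneg (a-b)]

lemma widthDir_nonneg {C : Set (Fin d → ℝ)} (hC : C.Nonempty) {y : Fin d → ℝ}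
    (hbdd : BddAbove {r | ∃ a ∈ C, ∃ b ∈ C, r = dot y (a - b)}) :
    0 ≤ widthDir C y := by
  obtain ⟨a, ha⟩ := hC
  exact le_csSup hbdd ⟨a, ha, a, ha, by rw [sub_self, dot_zero_right]⟩

lemma diamSet_bddAbove (hF : LatticeFacts L) {C : Set (Fin d → ℝ)} {S : ℝ}
    (hS : ∀ x ∈ C, dot x x ≤ S) :
    BddAbove {t : ℝ | 0 ≤ t ∧ ∃ a v, IsPrimitiveVec L v ∧ segment ℝ a (a + t • v) ⊆ C} := by
  obtain ⟨c, hc, hmin⟩ := hF.minpos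
  refine ⟨Real.sqrt (4 * S / c), ?_⟩
  rintro t ⟨ht0, a, v, ⟨hvL, hvne, -⟩, hseg⟩
  have ha : a ∈ C := hseg (left_mem_segment ℝ _ _)
  have hb : a + t • v ∈ C := hseg (right_mem_segment ℝ _ _)
  have h1 : dot (t•v) (t•v) ≤ 4 * S := by
    have h2 : (a + t•v) - a = t•v := add_sub_cancel_left a _
    have h5 := Qdiff_le (a + t•v) a
    rw [h2] at h5
    have h3 := hS a ha; have h4 := hS _ hb; linarith
  have h3 : t*t*c ≤ 4*S := by
    rw [dot_smul_left, dot_smul_right] at h1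
    nlinarith [hmin v hvL hvne, mul_nonneg ht0 ht0]
  have h6 : t*t ≤ 4*S/c := by rw [le_div_iff₀ hc]; linarith
  calc t = Real.sqrt (t*t) := (Real.sqrt_mul_self ht0).symm
  _ ≤ _ := Real.sqrt_le_sqrt h6

lemma exists_shortest (hF : LatticeFacts L) (hnz : ∃ w ∈ L, w ≠ 0) :
    ∃ v ∈ L, v ≠ 0 ∧ ∀ a ∈ L, a ≠ 0 → dot v v ≤ dot a a := by
  obtain ⟨w0, hw0L, hw0ne⟩ := hnz
  set F := ((hF.finball (dot w0 w0)).toFinset).erase 0 with hFdef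
  have hne : F.Nonempty := by
    refine ⟨w0, ?_⟩
    rw [hFdef, Finset.mem_erase, Set.Finite.mem_toFinset]
    exact ⟨hw0ne, hw0L, le_refl _⟩
  obtain ⟨v, hvF, hvmin⟩ := Finset.exists_min_image F (fun a => dot a a) hne
  rw [hFdef, Finset.mem_erase, Set.Finite.mem_toFinset] at hvF
  obtain ⟨hvne, hvL, hvQ⟩ := hvF
  refine ⟨v, hvL, hvne, fun a haL hane => ?_⟩
  by_cases haQ : dot a a ≤ dot w0 w0
  · apply hvmin
    rw [hFdef, Finset.mem_erase, Set.Finite.mem_toFinset]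
    exact ⟨hane, haL, haQ⟩
  · push_neg at haQ
    linarith

lemma shortest_half_mem (hF : LatticeFacts L) {v : Fin d → ℝ} (hvL : v ∈ L)
    (hmin : ∀ a ∈ L, a ≠ 0 → dot v v ≤ dot a a) :
    ((1:ℝ)/2) • v ∈ voronoiCell L := by
  rw [mem_voronoi_iff]
  intro a haL
  rw [dot_smul_right]
  rcases eq_or_ne a 0 with rfl | hane
  · simp [dot_zero_left]
  have hQa : 0 < dot a a := dot_pos hane
  have hQvQa : dot v v ≤ dot a a := hmin a haL hane
  rcases le_or_gt (dot a v) 0 with hle | hlt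
  · linarith
  · nlinarith [dot_cs a v, dot_nonneg v]

lemma latticeDiam_voronoi (hF : LatticeFacts L) (hnz : ∃ w ∈ L, w ≠ 0) :
    latticeDiam (voronoiCell L) L = 1 := by
  obtain ⟨v, hvL, hvne, hmin⟩ := exists_shortest hF hnz
  have hQv : 0 < dot v v := dot_pos hvne
  have hprim : IsPrimitiveVec L v := by
    refine ⟨hvL, hvne, fun t ht0 ht1 htv => ?_⟩
    have htvne : t • v ≠ 0 := smul_ne_zero (ne_of_gt ht0) hvne
    have := hmin (t • v) htv htvne
    rw [dot_smul_left, dot_smul_right] at this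
    have htt : t * t < 1 := by nlinarith
    nlinarith [mul_lt_mul_of_pos_right htt hQv]
  have hhalf : ((1:ℝ)/2) • v ∈ voronoiCell L := shortest_half_mem hF hvL hmin
  have hnhalf : -(((1:ℝ)/2) • v) ∈ voronoiCell L := voronoi_symm hF hhalf
  -- the upper bound
  have hub : ∀ t ∈ {t : ℝ | 0 ≤ t ∧ ∃ a w, IsPrimitiveVec L w ∧
      segment ℝ a (a + t • w) ⊆ voronoiCell L}, t ≤ 1 := by
    rintro t ⟨ht0, a, w, ⟨hwL, hwne, -⟩, hseg⟩
    have hQw : 0 < dot w w := dot_pos hwne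
    have haV : a ∈ voronoiCell L := hseg (left_mem_segment ℝ _ _)
    have hbV : a + t • w ∈ voronoiCell L := hseg (right_mem_segment ℝ _ _)
    have h1 := (mem_voronoi_iff.mp hbV) w hwL
    rw [dot_add_right, dot_smul_right] at h1
    have h2 := (mem_voronoi_iff.mp haV) (-w) (hF.neg_mem w hwL)
    rw [dot_neg_left, dot_neg_left, dot_neg_right, neg_neg] at h2
    nlinarith
  -- membership of 1
  have hmem : (1:ℝ) ∈ {t : ℝ | 0 ≤ t ∧ ∃ a w, IsPrimitiveVec L w ∧
      segment ℝ a (a + t • w) ⊆ voronoiCell L} := by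
    refine ⟨zero_le_one, -(((1:ℝ)/2) • v), v, hprim, ?_⟩
    have hEnd : -(((1:ℝ)/2) • v) + (1:ℝ) • v = ((1:ℝ)/2) • v := by module
    rw [hEnd]
    exact voronoi_convex.segment_subset hnhalf hhalf
  exact le_antisymm (csSup_le ⟨1, hmem⟩ hub) (le_csSup ⟨1, hub⟩ hmem)

lemma voronoi_complete (hL : IsLattice L) : IsLatticeComplete (voronoiCell L) L := by
  have hF := hL.latticeFacts
  refine ⟨voronoi_isBody hF, fun C' hC' hsub => ?_⟩
  obtain ⟨x, hxC', hxV⟩ := Set.exists_of_ssubset hsub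
  have hnz : ∃ w ∈ L, w ≠ 0 := by
    obtain ⟨a, ha, hane, -⟩ := violator_exists hxV
    exact ⟨a, ha, hane⟩
  have hdV : latticeDiam (voronoiCell L) L = 1 := latticeDiam_voronoi hF hnz
  obtain ⟨v, f, ε, μ, hprim, hε, hμ0, hμ1, hfV, hhalf, heq⟩ := lemmaA hF hxV
  have ha0 : -(((1:ℝ)/2) • v) ∈ voronoiCell L := voronoi_symm hF hhalf
  have hb0 : ((1:ℝ)/2 + ε) • v ∈ C' := by
    rw [heq]
    exact hC'.1 hxC' (hsub.subset hfV) hμ0.le (by linarith) (by ring)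
  have hseg : segment ℝ (-(((1:ℝ)/2) • v)) ((-(((1:ℝ)/2) • v)) + (1+ε) • v) ⊆ C' := by
    have hEnd : (-(((1:ℝ)/2) • v)) + (1+ε) • v = ((1:ℝ)/2 + ε) • v := by module
    rw [hEnd]
    exact (hC'.1).segment_subset (hsub.subset ha0) hb0
  have hmem : (1+ε) ∈ {t : ℝ | 0 ≤ t ∧ ∃ a w, IsPrimitiveVec L w ∧
      segment ℝ a (a + t • w) ⊆ C'} := ⟨by linarith, _, v, hprim, hseg⟩
  obtain ⟨S, hS0, hSb⟩ := compact_dot_bound hC'.2.1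
  have hge : 1 + ε ≤ latticeDiam C' L := le_csSup (diamSet_bddAbove hF hSb) hmem
  rw [hdV]
  intro h
  rw [h] at hge
  linarith
end widths

section reduced
variable {d : ℕ} {L : Set (Fin d → ℝ)}

lemma zero_mem_polar_voronoi : (0 : Fin d → ℝ) ∈ polarBody (voronoiCell L) := by
  intro x hx
  rw [dot_zero_right]
  exact zero_le_one

lemma latticeWidth_polar_voronoi (hL : IsLattice L) (hnz : ∃ w ∈ L, w ≠ 0) :
    latticeWidth (polarBody (voronoiCell L)) (dualLattice L) = 4 := by
  have hF := hL.latticeFacts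
  have hbid : dualLattice (dualLattice L) = L :=
    Set.Subset.antisymm (bidual_subset hL) (fun x hx => subset_bidual x hx)
  obtain ⟨S, hS, hSb⟩ := polar_voronoi_dot_bound hF
  set P := polarBody (voronoiCell L) with hP
  -- lower bound : widthDir P y ≥ 4 for each nonzero y ∈ L
  have hge4 : ∀ y ∈ L, y ≠ 0 → 4 ≤ widthDir P y := by
    intro y hyL hyne
    have hQy : 0 < dot y y := dot_pos hyne
    have haP : ((2 / dot y y) • y) ∈ P := by
      intro x hxV
      rw [dot_smul_right]
      have := (mem_voronoi_iff.mp hxV) y hyL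
      rw [dot_comm y x] at this
      rw [div_mul_eq_mul_div, div_le_one hQy]
      linarith
    have hbP : -((2 / dot y y) • y) ∈ P := polar_voronoi_symm hF haP
    apply le_csSup (widthSet_bddAbove hSb y)
    refine ⟨_, haP, _, hbP, ?_⟩
    have hcc : 2 / dot y y * dot y y = 2 := div_mul_cancel₀ 2 (ne_of_gt hQy)
    rw [dot_sub_right, dot_neg_right, dot_smul_right, hcc]
    norm_num
  -- upper bound at a shortest vector
  obtain ⟨v, hvL, hvne, hmin⟩ := exists_shortest hF hnz
  have hhalf : ((1:ℝ)/2) • v ∈ voronoiCell L := shortest_half_mem hF hvL hmin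
  have hle4 : widthDir P v ≤ 4 := by
    have hne0 : {r | ∃ a ∈ P, ∃ b ∈ P, r = dot v (a - b)}.Nonempty :=
      ⟨0, 0, zero_mem_polar_voronoi, 0, zero_mem_polar_voronoi, by
        rw [sub_self, dot_zero_right]⟩
    apply csSup_le hne0
    rintro r ⟨a, haP, b, hbP, rfl⟩
    have h1 : dot v a ≤ 2 := by
      have := haP _ hhalf
      rw [dot_smul_left] at this
      linarith
    have h2 : -2 ≤ dot v b := by
      have := (polar_voronoi_symm hF hbP) _ hhalf
      rw [dot_neg_right, dot_smul_left] at this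
      linarith
    rw [dot_sub_right]
    linarith
  have h4 : widthDir P v = 4 := le_antisymm hle4 (hge4 v hvL hvne)
  -- conclude
  have hmem : (4:ℝ) ∈ {w | ∃ y ∈ dualLattice (dualLattice L), y ≠ 0 ∧ w = widthDir P y} :=
    ⟨v, subset_bidual v hvL, hvne, h4.symm⟩
  have hlb : ∀ w ∈ {w | ∃ y ∈ dualLattice (dualLattice L), y ≠ 0 ∧ w = widthDir P y},
      (4:ℝ) ≤ w := by
    rintro w ⟨y, hy, hyne, rfl⟩
    rw [hbid] at hy
    exact hge4 y hy hyne
  exact le_antisymm (csInf_le ⟨4, hlb⟩ hmem) (le_csInf ⟨4, hmem⟩ hlb)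

lemma separation_point (hF : LatticeFacts L) {C' : Set (Fin d → ℝ)}
    (hC' : IsConvexBody C') (hsubP : C' ⊆ polarBody (voronoiCell L))
    {p₁ : Fin d → ℝ} (hp₁P : p₁ ∈ polarBody (voronoiCell L)) (hp₁C : p₁ ∉ C') :
    ∃ x : Fin d → ℝ, x ∉ voronoiCell L ∧
      ∀ a ∈ C', ∀ b ∈ C', dot (a - b) x ≤ 2 := by
  set P := polarBody (voronoiCell L) with hPdef
  obtain ⟨φ, uu, hsep, hup⟩ :=
    geometric_hahn_banach_closed_point hC'.1 hC'.2.1.isClosed hp₁C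
  set uφ : Fin d → ℝ := fun i => φ (Pi.single i 1) with huφ
  have hrep : ∀ y : Fin d → ℝ, φ y = dot y uφ := by
    intro y
    have h1 : y = ∑ i, y i • (Pi.single i (1:ℝ) : Fin d → ℝ) := by
      have h2 : ∀ i ∈ Finset.univ, y i • (Pi.single i (1:ℝ) : Fin d → ℝ)
          = Pi.single i (y i) := by
        intro i _
        funext j
        simp only [Pi.smul_apply, Pi.single_apply, smul_eq_mul]
        split_ifs <;> simp
      rw [Finset.sum_congr rfl h2, Finset.univ_sum_single]
    calc φ y = ∑ i, φ (y i • (Pi.single i (1:ℝ) : Fin d → ℝ)) := by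
          conv_lhs => rw [h1]
          exact map_sum φ _ _
    _ = ∑ i, y i * φ ((Pi.single i (1:ℝ) : Fin d → ℝ)) := by
          refine Finset.sum_congr rfl fun i _ => ?_
          rw [map_smul]
          rfl
    _ = dot y uφ := rfl
  have hC'ne : C'.Nonempty := by
    obtain ⟨c₀, hc₀⟩ := hC'.2.2
    exact ⟨c₀, interior_subset hc₀⟩
  have hPne : P.Nonempty := ⟨0, zero_mem_polar_voronoi⟩
  have hPcpt : IsCompact P := polar_voronoi_compact hF
  -- sup and inf of φ on C'
  have hbddA : BddAbove (φ '' C') := (hC'.2.1.image φ.continuous).bddAbove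
  have hbddB : BddBelow (φ '' C') := (hC'.2.1.image φ.continuous).bddBelow
  have hbddP : BddAbove (φ '' P) := (hPcpt.image φ.continuous).bddAbove
  set M : ℝ := sSup (φ '' C') with hM
  set m : ℝ := sInf (φ '' C') with hm
  set h : ℝ := sSup (φ '' P) with hh
  -- M - m > 0
  obtain ⟨c₀, hc₀⟩ := hC'.2.2
  obtain ⟨t, hts, hto, hct⟩ := mem_interior.mp hc₀
  obtain ⟨δ, hδ, hball⟩ := Metric.isOpen_iff.mp hto c₀ hct
  have hballC : Metric.ball c₀ δ ⊆ C' := hball.trans hts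
  have huφne : uφ ≠ 0 := by
    intro h0
    have h1 : φ c₀ < φ p₁ := lt_trans (hsep c₀ (interior_subset hc₀)) hup
    rw [hrep, hrep, h0, dot_zero_right, dot_zero_right] at h1
    exact lt_irrefl _ h1
  have hQu : 0 < dot uφ uφ := dot_pos huφne
  set τ : ℝ := δ / (2 * (‖uφ‖ + 1)) with hτ
  have hτpos : 0 < τ := by
    rw [hτ]; positivity
  have hmemball : ∀ σ : ℝ, |σ| ≤ τ → c₀ + σ • uφ ∈ C' := by
    intro σ hσ
    apply hballC
    rw [Metric.mem_ball, dist_eq_norm, add_sub_cancel_left, norm_smul, Real.norm_eq_abs]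
    have h1 : |σ| * ‖uφ‖ ≤ τ * ‖uφ‖ := mul_le_mul_of_nonneg_right hσ (norm_nonneg _)
    have h2 : τ * ‖uφ‖ < δ := by
      rw [hτ, div_mul_eq_mul_div, div_lt_iff₀ (by positivity)]
      nlinarith [norm_nonneg uφ]
    linarith
  have hMm : 2 * (τ * dot uφ uφ) ≤ M - m := by
    have hplus : φ (c₀ + τ • uφ) = φ c₀ + τ * dot uφ uφ := by
      rw [map_add, map_smul, hrep uφ]; rfl
    have hminus : φ (c₀ + (-τ) • uφ) = φ c₀ - τ * dot uφ uφ := by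
      rw [map_add, map_smul, hrep uφ]
      show φ c₀ + (-τ) * dot uφ uφ = _
      ring
    have h1 : φ c₀ + τ * dot uφ uφ ≤ M := by
      rw [← hplus]
      exact le_csSup hbddA ⟨_, hmemball τ (by rw [abs_of_pos hτpos]), rfl⟩
    have h2 : m ≤ φ c₀ - τ * dot uφ uφ := by
      rw [← hminus]
      exact csInf_le hbddB ⟨_, hmemball (-τ) (by rw [abs_neg, abs_of_pos hτpos]), rfl⟩
    linarith
  have hMmpos : 0 < M - m := lt_of_lt_of_le (by positivity) hMm
  -- the point x
  refine ⟨(2 / (M - m)) • uφ, ?_, ?_⟩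
  · -- x ∉ V
    intro hxV
    -- h > (M-m)/2
    have hMh : M < h := by
      have h1 : M ≤ uu := csSup_le (hC'ne.image φ) (by rintro r ⟨b, hb, rfl⟩; exact (hsep b hb).le)
      have h2 : φ p₁ ≤ h := le_csSup hbddP ⟨p₁, hp₁P, rfl⟩
      linarith
    have hmh : -h ≤ m := by
      apply le_csInf (hC'ne.image φ)
      rintro r ⟨b, hb, rfl⟩
      have hbP : -b ∈ P := polar_voronoi_symm hF (hsubP hb)
      have h2 : φ (-b) ≤ h := le_csSup hbddP ⟨-b, hbP, rfl⟩
      rw [map_neg] at h2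
      linarith
    have hlth : (M - m)/2 < h := by linarith
    obtain ⟨r, ⟨pstar, hpstarP, rfl⟩, hrgt⟩ := exists_lt_of_lt_csSup (hPne.image φ) hlth
    -- pstar ∈ P and x ∈ V gives dot x pstar ≤ 1
    have hle1 : dot ((2 / (M - m)) • uφ) pstar ≤ 1 := hpstarP _ hxV
    have hgt1 : 1 < dot ((2 / (M - m)) • uφ) pstar := by
      rw [dot_smul_left, dot_comm uφ pstar, ← hrep pstar]
      rw [div_mul_eq_mul_div, lt_div_iff₀ hMmpos]
      linarith
    linarith
  · -- width bound
    intro a ha b hb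
    rw [dot_smul_right, ← hrep (a-b), map_sub]
    have h1 : φ a ≤ M := le_csSup hbddA ⟨a, ha, rfl⟩
    have h2 : m ≤ φ b := csInf_le hbddB ⟨b, hb, rfl⟩
    rw [div_mul_eq_mul_div, div_le_iff₀ hMmpos]
    linarith
end reduced

section final
variable {d : ℕ} {L : Set (Fin d → ℝ)}

lemma polar_voronoi_reduced (hL : IsLattice L) :
    IsLatticeReduced (polarBody (voronoiCell L)) (dualLattice L) := by
  have hF := hL.latticeFacts
  refine ⟨polar_voronoi_isBody hF, fun C' hC' hsub => ?_⟩
  obtain ⟨p₁, hp₁P, hp₁C⟩ := Set.exists_of_ssubset hsub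
  by_cases hd : d = 0
  · exfalso
    subst hd
    obtain ⟨c₀, hc₀⟩ := hC'.2.2
    have hc : c₀ ∈ C' := interior_subset hc₀
    have hcp : c₀ = p₁ := funext fun i => i.elim0
    exact hp₁C (hcp ▸ hc)
  have hnz := lattice_nonzero_vec hL hd
  have hwP := latticeWidth_polar_voronoi hL hnz
  intro hEq
  obtain ⟨x, hx1, hx2⟩ := separation_point hF hC' hsub.subset hp₁P hp₁C
  obtain ⟨v, f, ε, μ, hprim, hε, hμ0, hμ1, hfV, hhalf, heq⟩ := lemmaA hF hx1
  obtain ⟨hvL, hvne, -⟩ := hprim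
  have hnf : -f ∈ voronoiCell L := voronoi_symm hF hfV
  have hkey : ∀ a ∈ C', ∀ b ∈ C', dot v (a - b) ≤ 2 / (1/2 + ε) := by
    intro a ha b hb
    have hq : dot (a - b) (((1:ℝ)/2 + ε) • v) ≤ 2 := by
      rw [heq, dot_add_right, dot_smul_right, dot_smul_right]
      have h1 : dot (a-b) x ≤ 2 := hx2 a ha b hb
      have h2 : dot (a-b) f ≤ 2 := by
        rw [dot_comm (a-b) f, dot_sub_right]
        have h3 : dot f a ≤ 1 := (hsub.subset ha) f hfV
        have h4 : -1 ≤ dot f b := by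
          have := (hsub.subset hb) (-f) hnf
          rw [dot_neg_left] at this
          linarith
        linarith
      linarith [mul_le_mul_of_nonneg_left h1 hμ0.le,
        mul_le_mul_of_nonneg_left h2 (by linarith : (0:ℝ) ≤ 1 - μ)]
    rw [dot_smul_right] at hq
    rw [dot_comm v (a-b), le_div_iff₀ (by linarith : (0:ℝ) < 1/2 + ε)]
    linarith [hq]
  have hC'ne : C'.Nonempty := by
    obtain ⟨c₀, hc₀⟩ := hC'.2.2; exact ⟨c₀, interior_subset hc₀⟩
  have hwv : widthDir C' v ≤ 2 / (1/2 + ε) := by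
    have hne0 : {r | ∃ a ∈ C', ∃ b ∈ C', r = dot v (a - b)}.Nonempty :=
      ⟨0, hC'ne.some, hC'ne.some_mem, hC'ne.some, hC'ne.some_mem, by
        rw [sub_self, dot_zero_right]⟩
    apply csSup_le hne0
    rintro r ⟨a, ha, b, hb, rfl⟩
    exact hkey a ha b hb
  obtain ⟨S, hS0, hSb⟩ := compact_dot_bound hC'.2.1
  have hbb : BddBelow {w | ∃ y ∈ dualLattice (dualLattice L), y ≠ 0 ∧ w = widthDir C' y} := by
    refine ⟨0, ?_⟩
    rintro w ⟨y, hy, hyne, rfl⟩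
    exact widthDir_nonneg hC'ne (widthSet_bddAbove hSb y)
  have hle : latticeWidth C' (dualLattice L) ≤ widthDir C' v :=
    csInf_le hbb ⟨v, subset_bidual v hvL, hvne, rfl⟩
  rw [hEq, hwP] at hle
  have hlt : 2 / (1/2 + ε) < 4 := by
    rw [div_lt_iff₀ (by linarith : (0:ℝ) < 1/2 + ε)]
    linarith
  linarith
end final

/-- the Voronoi cell of a lattice is lattice complete w.r.t. the
lattice, and its polar is lattice reduced w.r.t. the dual lattice. -/
theorem voronoiCell_complete_and_polar_reduced {d : ℕ} (L : Set (Fin d → ℝ))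
    (hL : IsLattice L) :
    IsLatticeComplete (voronoiCell L) L ∧
    IsLatticeReduced (polarBody (voronoiCell L)) (dualLattice L) :=
  ⟨voronoi_complete hL, polar_voronoi_reduced hL⟩
end
end
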